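/- arXiv:1104.0268 — 5 statements merged into one kernel-verified Lean document; each statement's English description precedes it below -/
import Mathlib

section
/- Let I be a two-sided ideal of T which is homogeneous with respect to the ℕ^θ-grading. Let S and S' be two minimal sets of homogeneous generators of I (each generates I as a two-sided ideal, and no proper subset does), and assume that for each α ∈ ℕ^θ the set S contains at most one element of degree α, and similarly for S'. For α ∈ ℕ^θ, let I(S,α) denote the two-sided ideal generated by the elements of S of degree β with β ≤ α componentwise and β ≠ α (and similarly I(S',α)). Then: for each s ∈ S of degree α there exist t ∈ S' of degree α and c ∈ kˣ such that s − c·t ∈ I(S,α); and moreover I(S,α) = I(S',α) for every α. -/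
/-- The multidegree in `ℕ^θ` of a word in the letters `x_1, …, x_θ`. -/
def wordDegree {θ : ℕ} (w : FreeMonoid (Fin θ)) : Fin θ → ℕ :=
  fun i => (FreeMonoid.toList w).count i

/-- An element of the free algebra `T = k⟨x_1,…,x_θ⟩` (realized as the monoid algebra of
the free monoid on `θ` letters) is homogeneous of multidegree `α ∈ ℕ^θ` if it is a linear
combination of words of multidegree `α`. -/
def IsHomogeneous {k : Type*} [Field k] {θ : ℕ} (α : Fin θ → ℕ)
    (s : MonoidAlgebra k (FreeMonoid (Fin θ))) : Prop :=
  ∀ w ∈ s.coeff.support, wordDegree w = α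

/-- `lowerIdeal k S α` is the two-sided ideal `I(S,α)` generated by the elements of `S`
whose degree `β` satisfies `β ≤ α` componentwise and `β ≠ α`. -/
noncomputable def lowerIdeal (k : Type*) [Field k] {θ : ℕ}
    (S : Set (MonoidAlgebra k (FreeMonoid (Fin θ)))) (α : Fin θ → ℕ) :
    TwoSidedIdeal (MonoidAlgebra k (FreeMonoid (Fin θ))) :=
  TwoSidedIdeal.span {s | s ∈ S ∧ ∃ β : Fin θ → ℕ, IsHomogeneous β s ∧ β ≤ α ∧ β ≠ α}

section Lemmas
open Pointwise
variable {k : Type*} [Field k] {θ : ℕ}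

lemma wordDegree_mul (u v : FreeMonoid (Fin θ)) :
    wordDegree (u * v) = wordDegree u + wordDegree v := by
  funext i
  simp [wordDegree, FreeMonoid.toList_mul, List.count_append]

lemma wordDegree_one : wordDegree (1 : FreeMonoid (Fin θ)) = 0 := by
  funext i; simp [wordDegree, FreeMonoid.toList_one]

lemma eq_one_of_wordDegree_eq_zero {w : FreeMonoid (Fin θ)}
    (h : wordDegree w = 0) : w = 1 := by
  rcases hl : FreeMonoid.toList w with _ | ⟨x, xs⟩
  · rw [← FreeMonoid.ofList_toList w, hl]; rfl
  · exfalso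
    have := congrFun h x
    simp [wordDegree, hl, List.count_cons] at this

lemma MA_add_apply (f g : MonoidAlgebra k (FreeMonoid (Fin θ))) (w : FreeMonoid (Fin θ)) :
    (f + g).coeff w = f.coeff w + g.coeff w := rfl

lemma MA_neg_apply (f : MonoidAlgebra k (FreeMonoid (Fin θ))) (w : FreeMonoid (Fin θ)) :
    (-f).coeff w = -(f.coeff w) := rfl

noncomputable def proj {k : Type*} [Field k] {θ : ℕ} (α : Fin θ → ℕ)
    (f : MonoidAlgebra k (FreeMonoid (Fin θ))) : MonoidAlgebra k (FreeMonoid (Fin θ)) :=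
  letI : DecidablePred (fun w : FreeMonoid (Fin θ) => wordDegree w = α) := Classical.decPred _
  MonoidAlgebra.ofCoeff (Finsupp.filter (fun w => wordDegree w = α) f.coeff)

lemma proj_add (α : Fin θ → ℕ) (f g : MonoidAlgebra k (FreeMonoid (Fin θ))) :
    proj α (f + g) = proj α f + proj α g := by
  ext w
  simp only [proj, MonoidAlgebra.coeff_ofCoeff, Finsupp.filter_apply, MA_add_apply]
  split_ifs with h <;> simp [MA_add_apply, Finsupp.filter_apply, h]

lemma proj_zero (α : Fin θ → ℕ) : proj α (0 : MonoidAlgebra k (FreeMonoid (Fin θ))) = 0 := by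
  ext w
  simp only [proj, MonoidAlgebra.coeff_ofCoeff, MonoidAlgebra.coeff_zero, Finsupp.filter_apply, Finsupp.coe_zero, Pi.zero_apply]
  split_ifs <;> rfl

lemma proj_neg (α : Fin θ → ℕ) (f : MonoidAlgebra k (FreeMonoid (Fin θ))) :
    proj α (-f) = - proj α f := by
  ext w
  simp only [proj, MonoidAlgebra.coeff_ofCoeff, Finsupp.filter_apply, MA_neg_apply]
  split_ifs with h <;> simp [MA_neg_apply, Finsupp.filter_apply, h]

lemma proj_of_homog {α : Fin θ → ℕ} {f : MonoidAlgebra k (FreeMonoid (Fin θ))}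
    (hf : IsHomogeneous α f) : proj α f = f := by
  ext w
  rw [proj, MonoidAlgebra.coeff_ofCoeff]
  rw [Finsupp.filter_apply]
  split_ifs with h
  · rfl
  · by_cases hw : w ∈ f.coeff.support
    · exact absurd (hf w hw) h
    · simp only [Finsupp.notMem_support_iff] at hw
      exact hw.symm

lemma proj_of_homog_ne {α β : Fin θ → ℕ} {f : MonoidAlgebra k (FreeMonoid (Fin θ))}
    (hf : IsHomogeneous β f) (hne : β ≠ α) : proj α f = 0 := by
  ext w
  rw [proj, MonoidAlgebra.coeff_ofCoeff]
  rw [Finsupp.filter_apply]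
  split_ifs with h
  · by_cases hw : w ∈ f.coeff.support
    · exact absurd (hf w hw ▸ h) hne
    · simpa using hw
  · rfl

lemma homog_sandwich {β : Fin θ → ℕ} {t : MonoidAlgebra k (FreeMonoid (Fin θ))}
    (ht : IsHomogeneous β t) (w v : FreeMonoid (Fin θ)) (c d : k) :
    IsHomogeneous (wordDegree w + β + wordDegree v)
      (MonoidAlgebra.single w c * t * MonoidAlgebra.single v d) := by
  classical
  intro u hu
  have h2 := MonoidAlgebra.support_coeff_mul_subset (MonoidAlgebra.single w c * t) (MonoidAlgebra.single v d) hu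
  rw [Finset.mem_mul] at h2
  obtain ⟨y, hy, z, hz, rfl⟩ := h2
  have h3 := MonoidAlgebra.support_coeff_mul_subset (MonoidAlgebra.single w c) t hy
  rw [Finset.mem_mul] at h3
  obtain ⟨y1, hy1, y2, hy2, rfl⟩ := h3
  have hw : y1 = w := by rw [MonoidAlgebra.coeff_single] at hy1; simpa using Finsupp.support_single_subset hy1
  have hv : z = v := by rw [MonoidAlgebra.coeff_single] at hz; simpa using Finsupp.support_single_subset hz
  subst hw hv
  rw [wordDegree_mul, wordDegree_mul, ht y2 hy2]

lemma single_one_mul_eq (c : k) (t : MonoidAlgebra k (FreeMonoid (Fin θ))) :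
    MonoidAlgebra.single (1 : FreeMonoid (Fin θ)) c * t = c • t := by
  rw [show MonoidAlgebra.single (1 : FreeMonoid (Fin θ)) c
      = c • (1 : MonoidAlgebra k (FreeMonoid (Fin θ))) by
    rw [MonoidAlgebra.one_def, MonoidAlgebra.smul_single, smul_eq_mul, mul_one]]
  rw [smul_mul_assoc, one_mul]

lemma single_one_sandwich (c d : k) (t : MonoidAlgebra k (FreeMonoid (Fin θ))) :
    MonoidAlgebra.single (1 : FreeMonoid (Fin θ)) c * t
      * MonoidAlgebra.single (1 : FreeMonoid (Fin θ)) d = (c * d) • t := by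
  rw [show MonoidAlgebra.single (1 : FreeMonoid (Fin θ)) c
      = c • (1 : MonoidAlgebra k (FreeMonoid (Fin θ))) by
    rw [MonoidAlgebra.one_def, MonoidAlgebra.smul_single, smul_eq_mul, mul_one]]
  rw [show MonoidAlgebra.single (1 : FreeMonoid (Fin θ)) d
      = d • (1 : MonoidAlgebra k (FreeMonoid (Fin θ))) by
    rw [MonoidAlgebra.one_def, MonoidAlgebra.smul_single, smul_eq_mul, mul_one]]
  rw [smul_mul_assoc, one_mul, mul_smul_comm, mul_one, smul_smul, mul_comm d c]

/-- Claim A: projections of sandwiches lie in the two-sided ideal generated by `t`. -/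
lemma proj_sandwich_mem_span {β : Fin θ → ℕ} {t : MonoidAlgebra k (FreeMonoid (Fin θ))}
    (ht : IsHomogeneous β t) (α : Fin θ → ℕ)
    (a b : MonoidAlgebra k (FreeMonoid (Fin θ))) :
    proj α (a * t * b) ∈ TwoSidedIdeal.span {t} := by
  induction a using MonoidAlgebra.induction_linear with
  | zero => rw [zero_mul, zero_mul, proj_zero]; exact TwoSidedIdeal.zero_mem _
  | add f g hf hg =>
      rw [add_mul, add_mul, proj_add]; exact TwoSidedIdeal.add_mem _ hf hg
  | single w c =>
      induction b using MonoidAlgebra.induction_linear with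
      | zero => rw [mul_zero, proj_zero]; exact TwoSidedIdeal.zero_mem _
      | add f g hf hg =>
          rw [mul_add, proj_add]; exact TwoSidedIdeal.add_mem _ hf hg
      | single v d =>
          have h := homog_sandwich ht w v c d
          by_cases hd : wordDegree w + β + wordDegree v = α
          · rw [proj_of_homog (hd ▸ h)]
            exact TwoSidedIdeal.mul_mem_right _ _ _
              (TwoSidedIdeal.mul_mem_left _ _ _ (TwoSidedIdeal.subset_span rfl))
          · rw [proj_of_homog_ne h hd]; exact TwoSidedIdeal.zero_mem _

/-- Claim B: the top-degree projection of a sandwich of a degree-`α` element. -/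
lemma proj_sandwich_top {α : Fin θ → ℕ} {t : MonoidAlgebra k (FreeMonoid (Fin θ))}
    (ht : IsHomogeneous α t) (a b : MonoidAlgebra k (FreeMonoid (Fin θ))) :
    proj α (a * t * b) = (a.coeff 1 * b.coeff 1) • t := by
  induction a using MonoidAlgebra.induction_linear with
  | zero => rw [zero_mul, zero_mul, proj_zero]; simp
  | add f g hf hg =>
      rw [add_mul, add_mul, proj_add, hf, hg, MA_add_apply, add_mul, add_smul]
  | single w c =>
      induction b using MonoidAlgebra.induction_linear with
      | zero => rw [mul_zero, proj_zero]; simp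
      | add f g hf hg =>
          rw [mul_add, proj_add, hf, hg, MA_add_apply, mul_add, add_smul]
      | single v d =>
          have h := homog_sandwich ht w v c d
          by_cases hw : w = 1
          · by_cases hv : v = 1
            · subst hw hv
              have hdeg : wordDegree (1 : FreeMonoid (Fin θ)) + α
                  + wordDegree (1 : FreeMonoid (Fin θ)) = α := by
                rw [wordDegree_one]; simp
              rw [proj_of_homog (hdeg ▸ h), single_one_sandwich]
              congr 1
              simp [MonoidAlgebra.coeff_single, Finsupp.single_eq_same]
            · have hvd : wordDegree v ≠ 0 := fun hz => hv (eq_one_of_wordDegree_eq_zero hz)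
              have hne : wordDegree w + α + wordDegree v ≠ α := by
                intro he
                apply hvd
                funext i
                have h2 := congrFun he i
                simp only [Pi.add_apply] at h2
                simp only [Pi.zero_apply]
                omega
              rw [proj_of_homog_ne h hne]
              have : (MonoidAlgebra.single v d : MonoidAlgebra k (FreeMonoid (Fin θ))).coeff 1 = 0 :=
                Finsupp.single_eq_of_ne' (by simpa using hv)
              rw [this, mul_zero, zero_smul]
          · have hwd : wordDegree w ≠ 0 := fun hz => hw (eq_one_of_wordDegree_eq_zero hz)
            have hne : wordDegree w + α + wordDegree v ≠ α := by
              intro he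
              apply hwd
              funext i
              have h2 := congrFun he i
              simp only [Pi.add_apply] at h2
              simp only [Pi.zero_apply]
              omega
            rw [proj_of_homog_ne h hne]
            have : (MonoidAlgebra.single w c : MonoidAlgebra k (FreeMonoid (Fin θ))).coeff 1 = 0 :=
              Finsupp.single_eq_of_ne' (by simpa using hw)
            rw [this, zero_mul, zero_smul]

/-- Claim C: if `β ≰ α`, the degree-`α` projection of a sandwich vanishes. -/
lemma proj_sandwich_notle {α β : Fin θ → ℕ} {t : MonoidAlgebra k (FreeMonoid (Fin θ))}
    (ht : IsHomogeneous β t) (hβ : ¬ β ≤ α)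
    (a b : MonoidAlgebra k (FreeMonoid (Fin θ))) :
    proj α (a * t * b) = 0 := by
  induction a using MonoidAlgebra.induction_linear with
  | zero => rw [zero_mul, zero_mul, proj_zero]
  | add f g hf hg => rw [add_mul, add_mul, proj_add, hf, hg, add_zero]
  | single w c =>
      induction b using MonoidAlgebra.induction_linear with
      | zero => rw [mul_zero, proj_zero]
      | add f g hf hg => rw [mul_add, proj_add, hf, hg, add_zero]
      | single v d =>
          have h := homog_sandwich ht w v c d
          refine proj_of_homog_ne h ?_
          intro he
          refine hβ fun i => ?_
          have h2 := congrFun he i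
          simp only [Pi.add_apply] at h2
          show β i ≤ α i
          omega



lemma span_le_of_subset {R : Type*} [NonUnitalNonAssocRing R] {s : Set R}
    {I : TwoSidedIdeal R} (h : s ⊆ I) : TwoSidedIdeal.span s ≤ I :=
  fun _ hx => TwoSidedIdeal.mem_span_iff.mp hx I h

lemma lowerIdeal_mono {S : Set (MonoidAlgebra k (FreeMonoid (Fin θ)))} {β α : Fin θ → ℕ}
    (h1 : β ≤ α) (h2 : β ≠ α) : lowerIdeal k S β ≤ lowerIdeal k S α := by
  apply TwoSidedIdeal.span_mono
  rintro x ⟨hxS, γ, hγ, hγβ, hγne⟩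
  refine ⟨hxS, γ, hγ, le_trans hγβ h1, ?_⟩
  intro hγα
  subst hγα
  exact h2 (le_antisymm h1 hγβ)


lemma mem_lowerIdeal_of_gen {S : Set (MonoidAlgebra k (FreeMonoid (Fin θ)))} {α : Fin θ → ℕ}
    {x : MonoidAlgebra k (FreeMonoid (Fin θ))}
    (h : x ∈ S ∧ ∃ β : Fin θ → ℕ, IsHomogeneous β x ∧ β ≤ α ∧ β ≠ α) :
    x ∈ lowerIdeal k S α :=
  TwoSidedIdeal.subset_span h

lemma key {S' : Set (MonoidAlgebra k (FreeMonoid (Fin θ)))}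
    (hhom : ∀ t ∈ S', ∃ β : Fin θ → ℕ, IsHomogeneous β t)
    (huniq : ∀ s ∈ S', ∀ t ∈ S', ∀ γ : Fin θ → ℕ,
      IsHomogeneous γ s → IsHomogeneous γ t → s = t)
    (α : Fin θ → ℕ) {u : MonoidAlgebra k (FreeMonoid (Fin θ))}
    (hu : u ∈ TwoSidedIdeal.span S') (hhu : IsHomogeneous α u) :
    (∃ t ∈ S', IsHomogeneous α t ∧ ∃ c : k, u - c • t ∈ lowerIdeal k S' α) ∨
      u ∈ lowerIdeal k S' α := by
  rw [TwoSidedIdeal.mem_span_iff_mem_addSubgroup_closure] at hu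
  by_cases hP : ∃ t₀ ∈ S', IsHomogeneous α t₀
  · obtain ⟨t₀, ht₀S, ht₀⟩ := hP
    left
    refine ⟨t₀, ht₀S, ht₀, ?_⟩
    have main : ∀ z, z ∈ AddSubgroup.closure ((Set.univ : Set (MonoidAlgebra k (FreeMonoid (Fin θ)))) * S' * Set.univ) →
        ∃ c : k, proj α z - c • t₀ ∈ lowerIdeal k S' α := by
      intro z hz
      induction hz using AddSubgroup.closure_induction with
      | mem z hz =>
        rw [Set.mem_mul] at hz
        obtain ⟨y, hy, v, -, rfl⟩ := hz
        rw [Set.mem_mul] at hy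
        obtain ⟨a, -, t, htS, rfl⟩ := hy
        obtain ⟨β, hβ⟩ := hhom t htS
        by_cases h1 : β = α
        · subst h1
          refine ⟨a.coeff 1 * v.coeff 1, ?_⟩
          rw [proj_sandwich_top hβ a v, huniq t htS t₀ ht₀S β hβ ht₀, sub_self]
          exact TwoSidedIdeal.zero_mem _
        · by_cases h2 : β ≤ α
          · refine ⟨0, ?_⟩
            rw [zero_smul, sub_zero]
            exact span_le_of_subset (Set.singleton_subset_iff.mpr (mem_lowerIdeal_of_gen ⟨htS, β, hβ, h2, h1⟩))
              (proj_sandwich_mem_span hβ α a v)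
          · refine ⟨0, ?_⟩
            rw [proj_sandwich_notle hβ h2 a v, zero_smul, sub_zero]
            exact TwoSidedIdeal.zero_mem _
      | zero =>
        refine ⟨0, ?_⟩
        rw [proj_zero, zero_smul, sub_zero]
        exact TwoSidedIdeal.zero_mem _
      | add x y hx hy px py =>
        obtain ⟨c1, h1⟩ := px
        obtain ⟨c2, h2⟩ := py
        refine ⟨c1 + c2, ?_⟩
        rw [proj_add, add_smul]
        have := TwoSidedIdeal.add_mem _ h1 h2
        convert this using 1
        abel
      | neg x hx px =>
        obtain ⟨c, h⟩ := px
        refine ⟨-c, ?_⟩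
        rw [proj_neg, neg_smul]
        have := TwoSidedIdeal.neg_mem _ h
        convert this using 1
        abel
    obtain ⟨c, hc⟩ := main u hu
    exact ⟨c, by rwa [proj_of_homog hhu] at hc⟩
  · right
    have main : ∀ z, z ∈ AddSubgroup.closure ((Set.univ : Set (MonoidAlgebra k (FreeMonoid (Fin θ)))) * S' * Set.univ) →
        proj α z ∈ lowerIdeal k S' α := by
      intro z hz
      induction hz using AddSubgroup.closure_induction with
      | mem z hz =>
        rw [Set.mem_mul] at hz
        obtain ⟨y, hy, v, -, rfl⟩ := hz
        rw [Set.mem_mul] at hy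
        obtain ⟨a, -, t, htS, rfl⟩ := hy
        obtain ⟨β, hβ⟩ := hhom t htS
        by_cases h1 : β = α
        · exact absurd ⟨t, htS, h1 ▸ hβ⟩ hP
        · by_cases h2 : β ≤ α
          · exact span_le_of_subset (Set.singleton_subset_iff.mpr (mem_lowerIdeal_of_gen ⟨htS, β, hβ, h2, h1⟩))
              (proj_sandwich_mem_span hβ α a v)
          · rw [proj_sandwich_notle hβ h2 a v]
            exact TwoSidedIdeal.zero_mem _
      | zero =>
        rw [proj_zero]; exact TwoSidedIdeal.zero_mem _
      | add x y hx hy px py =>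
        rw [proj_add]; exact TwoSidedIdeal.add_mem _ px py
      | neg x hx px =>
        rw [proj_neg]; exact TwoSidedIdeal.neg_mem _ px
    have := main u hu
    rwa [proj_of_homog hhu] at this

lemma lower_incl {S S' : Set (MonoidAlgebra k (FreeMonoid (Fin θ)))}
    (hhom' : ∀ t ∈ S', ∃ β : Fin θ → ℕ, IsHomogeneous β t)
    (huniq' : ∀ s ∈ S', ∀ t ∈ S', ∀ γ : Fin θ → ℕ,
      IsHomogeneous γ s → IsHomogeneous γ t → s = t)
    (hSS' : ∀ x ∈ S, x ∈ TwoSidedIdeal.span S') (α : Fin θ → ℕ) :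
    lowerIdeal k S α ≤ lowerIdeal k S' α := by
  apply span_le_of_subset
  rintro x ⟨hxS, β, hβ, hβα, hβne⟩
  have hx : x ∈ TwoSidedIdeal.span S' := hSS' x hxS
  rcases key hhom' huniq' β hx hβ with ⟨t, htS, htβ, c, hct⟩ | h
  · have h1 : x - c • t ∈ lowerIdeal k S' α := lowerIdeal_mono hβα hβne hct
    have h2 : c • t ∈ lowerIdeal k S' α := by
      rw [← single_one_mul_eq]
      exact TwoSidedIdeal.mul_mem_left _ _ _
        (mem_lowerIdeal_of_gen ⟨htS, β, htβ, hβα, hβne⟩)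
    have h3 := TwoSidedIdeal.add_mem _ h1 h2
    rwa [sub_add_cancel] at h3
  · exact lowerIdeal_mono hβα hβne h

end Lemmas

/-- Two minimal sets `S`, `S'` of homogeneous generators of a homogeneous two-sided ideal
`I` of the free algebra, with at most one generator in each multidegree, agree degree by
degree up to scalars and lower terms; in particular `I(S,α) = I(S',α)` for every `α`. -/
theorem minimal_homogeneous_generators_correspond
    {k : Type*} [Field k] {θ : ℕ} (hθ : 1 ≤ θ)
    (I : TwoSidedIdeal (MonoidAlgebra k (FreeMonoid (Fin θ))))
    (hI : TwoSidedIdeal.span {x | x ∈ I ∧ ∃ α : Fin θ → ℕ, IsHomogeneous α x} = I)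
    (S S' : Set (MonoidAlgebra k (FreeMonoid (Fin θ))))
    (hS : TwoSidedIdeal.span S = I) (hS' : TwoSidedIdeal.span S' = I)
    (hSmin : ∀ s ∈ S, TwoSidedIdeal.span (S \ {s}) ≠ I)
    (hS'min : ∀ s ∈ S', TwoSidedIdeal.span (S' \ {s}) ≠ I)
    (hShom : ∀ s ∈ S, ∃ α : Fin θ → ℕ, IsHomogeneous α s)
    (hS'hom : ∀ s ∈ S', ∃ α : Fin θ → ℕ, IsHomogeneous α s)
    (hSuniq : ∀ s ∈ S, ∀ t ∈ S, ∀ α : Fin θ → ℕ,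
      IsHomogeneous α s → IsHomogeneous α t → s = t)
    (hS'uniq : ∀ s ∈ S', ∀ t ∈ S', ∀ α : Fin θ → ℕ,
      IsHomogeneous α s → IsHomogeneous α t → s = t) :
    (∀ s ∈ S, ∀ α : Fin θ → ℕ, IsHomogeneous α s →
      ∃ t ∈ S', IsHomogeneous α t ∧ ∃ c : kˣ, s - (c : k) • t ∈ lowerIdeal k S α) ∧
    (∀ α : Fin θ → ℕ, lowerIdeal k S α = lowerIdeal k S' α) := by
  have part2 : ∀ α : Fin θ → ℕ, lowerIdeal k S α = lowerIdeal k S' α := by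
    intro α
    apply le_antisymm
    · exact lower_incl hS'hom hS'uniq
        (fun x hx => by rw [hS', ← hS]; exact TwoSidedIdeal.subset_span hx) α
    · exact lower_incl hShom hSuniq
        (fun x hx => by rw [hS, ← hS']; exact TwoSidedIdeal.subset_span hx) α
  refine ⟨?_, part2⟩
  intro s hsS α hsα
  have hs0 : s ≠ 0 := by
    intro h
    apply hSmin s hsS
    apply le_antisymm
    · rw [← hS]; exact TwoSidedIdeal.span_mono Set.diff_subset
    · rw [← hS]
      apply span_le_of_subset
      intro x hx
      by_cases hxs : x = s
      · rw [hxs, h]; exact TwoSidedIdeal.zero_mem _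
      · exact TwoSidedIdeal.subset_span ⟨hx, hxs⟩
  have hlow : lowerIdeal k S α ≤ TwoSidedIdeal.span (S \ {s}) := by
    apply span_le_of_subset
    rintro x ⟨hxS, β, hβ, hβα, hβne⟩
    refine TwoSidedIdeal.subset_span ⟨hxS, fun hxs => ?_⟩
    rw [Set.mem_singleton_iff] at hxs
    subst hxs
    obtain ⟨w, hw⟩ := (Finsupp.support_nonempty_iff (f := x.coeff)).mpr (by simpa using hs0)
    exact hβne ((hβ w hw).symm.trans (hsα w hw))
  have hcontr : s ∉ lowerIdeal k S α := by
    intro hmem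
    apply hSmin s hsS
    apply le_antisymm
    · rw [← hS]; exact TwoSidedIdeal.span_mono Set.diff_subset
    · rw [← hS]
      apply span_le_of_subset
      intro x hx
      by_cases hxs : x = s
      · rw [hxs]; exact hlow hmem
      · exact TwoSidedIdeal.subset_span ⟨hx, hxs⟩
  have hsI : s ∈ TwoSidedIdeal.span S' := by
    rw [hS', ← hS]; exact TwoSidedIdeal.subset_span hsS
  rcases key hS'hom hS'uniq α hsI hsα with ⟨t, htS, htα, c, hct⟩ | h
  · rw [← part2 α] at hct
    by_cases hc : c = 0
    · rw [hc, zero_smul, sub_zero] at hct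
      exact absurd hct hcontr
    · exact ⟨t, htS, htα, Units.mk0 c hc, hct⟩
  · rw [← part2 α] at h
    exact absurd h hcontr
end

section
/- Let x ∈ ker π be a nonzero homogeneous element of degree m ≥ 2 which is of minimal degree, in the sense that ker π ∩ R(n) = 0 for all n < m. Then x is a primitive element of R: Δ(x) = x ⊗ 1 + 1 ⊗ x. -/
open scoped TensorProduct

/-- Let `π : R → B` be a surjective bialgebra homomorphism from a graded bialgebra
`R = ⊕ₙ R(n)` (with `R(0) = k·1`, a multiplicative and comultiplicative grading) whose
kernel is a graded submodule.  A nonzero homogeneous element of `ker π` of minimal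
degree `m ≥ 2` is primitive: `Δ(x) = x ⊗ 1 + 1 ⊗ x`. -/
theorem minimal_degree_kernel_element_is_primitive
    {k : Type*} [Field k] {R B : Type*} [Ring R] [Ring B]
    [Bialgebra k R] [Bialgebra k B]
    (π : R →ₐc[k] B) (hπ : Function.Surjective π)
    (ℛ : ℕ → Submodule k R)
    (hinternal : DirectSum.IsInternal ℛ)
    (hzero : ℛ 0 = (1 : Submodule k R))
    (hmul : ∀ i j : ℕ, ℛ i * ℛ j ≤ ℛ (i + j))
    (hcomul : ∀ n : ℕ, ∀ x ∈ ℛ n, Coalgebra.comul (R := k) x ∈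
        ⨆ p ∈ Finset.HasAntidiagonal.antidiagonal n,
          LinearMap.range (TensorProduct.map (ℛ p.1).subtype (ℛ p.2).subtype))
    (hcounit : ∀ n : ℕ, 1 ≤ n → ∀ x ∈ ℛ n, Coalgebra.counit (R := k) x = 0)
    (hker : ∀ y : R, π y = 0 →
        y ∈ Submodule.span k {z : R | π z = 0 ∧ ∃ n : ℕ, z ∈ ℛ n})
    (x : R) (hxker : π x = 0) (m : ℕ) (hm : 2 ≤ m) (hxmem : x ∈ ℛ m) (hx0 : x ≠ 0)
    (hmin : ∀ n : ℕ, n < m → ∀ y ∈ ℛ n, π y = 0 → y = 0) :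
    Coalgebra.comul (R := k) x = x ⊗ₜ[k] 1 + 1 ⊗ₜ[k] x := by
  classical
  letI : DirectSum.Decomposition ℛ := hinternal.chooseDecomposition
  set π' : R →ₗ[k] B := π.toLinearMap with hπ'def
  have hπ'app : ∀ z : R, π' z = π z := fun _ => rfl
  -- Step 1: graded components of kernel elements are in the kernel.
  have hproj : ∀ (n : ℕ) (z : R),
      z ∈ Submodule.span k {z : R | π z = 0 ∧ ∃ n' : ℕ, z ∈ ℛ n'} →
      π ((DirectSum.decompose ℛ z n : R)) = 0 := by
    intro n z hzspan
    induction hzspan using Submodule.span_induction with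
    | mem w hw =>
      obtain ⟨hw0, n', hwn'⟩ := hw
      rcases eq_or_ne n' n with rfl | hne
      · rw [DirectSum.decompose_of_mem_same ℛ hwn']; exact hw0
      · rw [DirectSum.decompose_of_mem_ne ℛ hwn' hne]; exact map_zero π
    | zero => simp
    | add a b _ _ iha ihb =>
      rw [DirectSum.decompose_add, DirectSum.add_apply, Submodule.coe_add, map_add,
        iha, ihb, add_zero]
    | smul c a _ ih =>
      rw [DirectSum.decompose_smul, DirectSum.smul_apply, Submodule.coe_smul, map_smul,
        ih, smul_zero]
  -- The span of low-degree pieces.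
  set V : Submodule k R := ⨆ n, ⨆ _ : n < m, ℛ n with hVdef
  have hRleV : ∀ n : ℕ, n < m → ℛ n ≤ V := fun n hn =>
    le_iSup₂ (f := fun n (_ : n < m) => ℛ n) n hn
  -- Components of elements of V vanish in degrees ≥ m.
  have hVzero : ∀ z ∈ V, ∀ n : ℕ, m ≤ n → (DirectSum.decompose ℛ z n : R) = 0 := by
    intro z hz n hn
    have hL : ∃ L : R →ₗ[k] R, ∀ w, L w = (DirectSum.decompose ℛ w n : R) :=
      ⟨{ toFun := fun w => (DirectSum.decompose ℛ w n : R)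
         map_add' := fun a b => by
           simp only []
           rw [DirectSum.decompose_add, DirectSum.add_apply]; rfl
         map_smul' := fun c a => by
           simp only []
           rw [DirectSum.decompose_smul, DirectSum.smul_apply]; rfl }, fun _ => rfl⟩
    obtain ⟨L, hLa⟩ := hL
    have hVle : V ≤ LinearMap.ker L := by
      refine iSup₂_le fun n' hn' => ?_
      intro w hw
      rw [LinearMap.mem_ker, hLa,
        DirectSum.decompose_of_mem_ne ℛ hw (by omega : n' ≠ n)]
    have := hVle hz
    rw [LinearMap.mem_ker, hLa] at this
    exact this
  -- π is injective on V.
  have hinj : ∀ z ∈ V, π z = 0 → z = 0 := by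
    intro z hz hzπ
    have hdec := DirectSum.sum_support_decompose ℛ z
    rw [← hdec]
    refine Finset.sum_eq_zero fun i _ => ?_
    by_cases hi : i < m
    · exact hmin i hi _ (DirectSum.decompose ℛ z i).2 (hproj i z (hker z hzπ))
    · exact hVzero z hz i (by omega)
  -- Decompose comul x as a sum over the antidiagonal.
  set s : Finset (ℕ × ℕ) := Finset.HasAntidiagonal.antidiagonal m with hsdef
  have key := hcomul m x hxmem
  rw [iSup_subtype'] at key
  rw [Submodule.mem_iSup_iff_exists_finsupp] at key
  obtain ⟨f, hf, hsum⟩ := key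
  set t : ℕ × ℕ → R ⊗[k] R := fun p =>
    if h : p ∈ s then f ⟨p, h⟩ else 0 with htdef
  have ht_mem : ∀ p (h : p ∈ s),
      t p ∈ LinearMap.range (TensorProduct.map (ℛ p.1).subtype (ℛ p.2).subtype) := by
    intro p h
    simp only [htdef, dif_pos h]
    exact hf ⟨p, h⟩
  have hsum' : ∑ p ∈ s, t p = Coalgebra.comul (R := k) x := by
    rw [← hsum]
    rw [← Finset.sum_attach s t]
    have h1 : ∀ q : {p // p ∈ s}, t ↑q = f q := by
      intro q
      simp only [htdef, dif_pos q.2]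
      rfl
    rw [Finset.sum_congr rfl fun q _ => h1 q]
    rw [Finsupp.sum]
    have hsub : f.support ⊆ s.attach := by
      rw [← Finset.univ_eq_attach]; exact Finset.subset_univ _
    exact (Finset.sum_subset hsub fun q _ hq => Finsupp.notMem_support_iff.mp hq).symm
  have h0m : ((0 : ℕ), m) ∈ s := by simp [hsdef]
  have hm0 : ((m : ℕ), 0) ∈ s := by simp [hsdef]
  -- Identify t (0, m).
  have hrange0 : ∀ z ∈ LinearMap.range (TensorProduct.map (ℛ 0).subtype (ℛ m).subtype),
      ∃ b ∈ ℛ m, z = (1 : R) ⊗ₜ[k] b := by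
    have hle : LinearMap.range (TensorProduct.map (ℛ 0).subtype (ℛ m).subtype) ≤
        LinearMap.range ((TensorProduct.mk k R R 1) ∘ₗ (ℛ m).subtype) := by
      rintro z ⟨w, rfl⟩
      induction w using TensorProduct.induction_on with
      | zero => rw [map_zero]; exact zero_mem _
      | tmul a b =>
        have ha1 : (a : R) ∈ (1 : Submodule k R) := by rw [← hzero]; exact a.2
        obtain ⟨c, hc⟩ := Submodule.mem_one.mp ha1
        refine ⟨⟨c • (b : R), Submodule.smul_mem _ _ b.2⟩, ?_⟩
        have hca : (a : R) = c • (1 : R) :=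
          hc.symm.trans (Algebra.algebraMap_eq_smul_one c)
        simp only [TensorProduct.map_tmul, Submodule.coe_subtype, LinearMap.coe_comp,
          Function.comp_apply, TensorProduct.mk_apply, hca]
        rw [TensorProduct.smul_tmul]
      | add u v hu hv => rw [map_add]; exact add_mem hu hv
    intro z hz
    obtain ⟨b, hb⟩ := hle hz
    exact ⟨(b : R), b.2, hb.symm⟩
  have hrange0' : ∀ z ∈ LinearMap.range (TensorProduct.map (ℛ m).subtype (ℛ 0).subtype),
      ∃ b ∈ ℛ m, z = b ⊗ₜ[k] (1 : R) := by
    have hle : LinearMap.range (TensorProduct.map (ℛ m).subtype (ℛ 0).subtype) ≤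
        LinearMap.range (((TensorProduct.mk k R R).flip 1) ∘ₗ (ℛ m).subtype) := by
      rintro z ⟨w, rfl⟩
      induction w using TensorProduct.induction_on with
      | zero => rw [map_zero]; exact zero_mem _
      | tmul b a =>
        have ha1 : (a : R) ∈ (1 : Submodule k R) := by rw [← hzero]; exact a.2
        obtain ⟨c, hc⟩ := Submodule.mem_one.mp ha1
        refine ⟨⟨c • (b : R), Submodule.smul_mem _ _ b.2⟩, ?_⟩
        have hca : (a : R) = c • (1 : R) :=
          hc.symm.trans (Algebra.algebraMap_eq_smul_one c)
        simp only [TensorProduct.map_tmul, Submodule.coe_subtype, LinearMap.coe_comp,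
          Function.comp_apply, LinearMap.flip_apply, TensorProduct.mk_apply, hca]
        rw [TensorProduct.smul_tmul]
      | add u v hu hv => rw [map_add]; exact add_mem hu hv
    intro z hz
    obtain ⟨b, hb⟩ := hle hz
    exact ⟨(b : R), b.2, hb.symm⟩
  obtain ⟨b, hbmem, hb⟩ := hrange0 _ (ht_mem (0, m) h0m)
  obtain ⟨a, hamem, ha⟩ := hrange0' _ (ht_mem (m, 0) hm0)
  -- counit computations
  have hbx : b = x := by
    have h1 := Coalgebra.rTensor_counit_comul (R := k) x
    rw [← hsum', map_sum] at h1
    rw [Finset.sum_eq_single ((0 : ℕ), m)] at h1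
    · rw [hb] at h1
      simp only [LinearMap.rTensor_tmul, Bialgebra.counit_one] at h1
      have := congrArg (TensorProduct.lid k R) h1
      simpa using this
    · intro p hp hne
      have hp1 : p.1 ≠ 0 := by
        intro h0
        apply hne
        have := Finset.HasAntidiagonal.mem_antidiagonal.mp (hsdef ▸ hp)
        ext <;> simp [h0] <;> omega
      obtain ⟨w, hw⟩ := ht_mem p hp
      rw [← hw]
      have hc0 : (LinearMap.rTensor R (Coalgebra.counit (R := k) (A := R))) ∘ₗ
          (TensorProduct.map (ℛ p.1).subtype (ℛ p.2).subtype) = 0 := by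
        apply TensorProduct.ext'
        intro u v
        simp [hcounit p.1 (Nat.one_le_iff_ne_zero.mpr hp1) u u.2]
      exact LinearMap.congr_fun hc0 w
    · intro h; exact absurd h0m h
  have hax : a = x := by
    have h1 := Coalgebra.lTensor_counit_comul (R := k) x
    rw [← hsum', map_sum] at h1
    rw [Finset.sum_eq_single ((m : ℕ), 0)] at h1
    · rw [ha] at h1
      simp only [LinearMap.lTensor_tmul, Bialgebra.counit_one] at h1
      have := congrArg (TensorProduct.rid k R) h1
      simpa using this
    · intro p hp hne
      have hp2 : p.2 ≠ 0 := by
        intro h0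
        apply hne
        have := Finset.HasAntidiagonal.mem_antidiagonal.mp (hsdef ▸ hp)
        ext <;> simp [h0] <;> omega
      obtain ⟨w, hw⟩ := ht_mem p hp
      rw [← hw]
      have hc0 : (LinearMap.lTensor R (Coalgebra.counit (R := k) (A := R))) ∘ₗ
          (TensorProduct.map (ℛ p.1).subtype (ℛ p.2).subtype) = 0 := by
        apply TensorProduct.ext'
        intro u v
        simp [hcounit p.2 (Nat.one_le_iff_ne_zero.mpr hp2) v v.2]
      exact LinearMap.congr_fun hc0 w
    · intro h; exact absurd hm0 h
  -- split the sum
  set s' : Finset (ℕ × ℕ) := (s.erase (0, m)).erase (m, 0) with hs'def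
  have hm0' : ((m : ℕ), 0) ∈ s.erase (0, m) := by
    refine Finset.mem_erase.mpr ⟨?_, hm0⟩
    intro h
    have := congrArg Prod.fst h
    simp at this
    omega
  have hsplit : Coalgebra.comul (R := k) x = t (0, m) + (t (m, 0) + ∑ p ∈ s', t p) := by
    rw [← hsum', ← Finset.add_sum_erase s t h0m, ← Finset.add_sum_erase _ t hm0']
  have h0mval : t (0, m) = (1 : R) ⊗ₜ[k] x := by rw [hb, hbx]
  have hm0val : t (m, 0) = x ⊗ₜ[k] (1 : R) := by rw [ha, hax]
  set y : R ⊗[k] R := ∑ p ∈ s', t p with hydef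
  -- y lies in the image of V ⊗ V
  have hyV : y ∈ LinearMap.range (TensorProduct.map V.subtype V.subtype) := by
    refine Submodule.sum_mem _ fun p hp => ?_
    have hps : p ∈ s := Finset.mem_of_mem_erase (Finset.mem_of_mem_erase hp)
    have hpsum : p.1 + p.2 = m := Finset.HasAntidiagonal.mem_antidiagonal.mp (hsdef ▸ hps)
    have hne1 : p ≠ (0, m) := Finset.ne_of_mem_erase (Finset.mem_of_mem_erase hp)
    have hne2 : p ≠ (m, 0) := Finset.ne_of_mem_erase hp
    have hp1 : p.1 < m := by
      rcases Nat.lt_or_ge p.1 m with h | h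
      · exact h
      · exfalso; apply hne2; have : p.1 = m := by omega
        ext <;> simp [this] <;> omega
    have hp2 : p.2 < m := by
      rcases Nat.lt_or_ge p.2 m with h | h
      · exact h
      · exfalso; apply hne1; have : p.2 = m := by omega
        ext <;> simp [this] <;> omega
    obtain ⟨w, hw⟩ := ht_mem p hps
    refine ⟨TensorProduct.map (Submodule.inclusion (hRleV p.1 hp1))
      (Submodule.inclusion (hRleV p.2 hp2)) w, ?_⟩
    rw [← hw]
    have hcomp := TensorProduct.map_comp V.subtype V.subtype
      (Submodule.inclusion (hRleV p.1 hp1)) (Submodule.inclusion (hRleV p.2 hp2))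
    rw [Submodule.subtype_comp_inclusion, Submodule.subtype_comp_inclusion] at hcomp
    exact (LinearMap.congr_fun hcomp w).symm
  -- y is killed by π ⊗ π
  have hπy : TensorProduct.map π' π' y = 0 := by
    have hcx : TensorProduct.map π' π' (Coalgebra.comul (R := k) x) =
        Coalgebra.comul (R := k) (π x) :=
      LinearMap.congr_fun (CoalgHomClass.map_comp_comul (F := R →ₐc[k] B) π) x
    have hy' : y = Coalgebra.comul (R := k) x - (1 : R) ⊗ₜ[k] x - x ⊗ₜ[k] (1 : R) := by
      rw [hsplit, h0mval, hm0val]; abel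
    rw [hy', map_sub, map_sub, hcx, hxker, map_zero]
    simp only [TensorProduct.map_tmul, hπ'app, hxker]
    simp [TensorProduct.tmul_zero, TensorProduct.zero_tmul]
  -- injectivity of π ⊗ π on V ⊗ V
  have hπV : Function.Injective (π' ∘ₗ V.subtype) := by
    rw [← LinearMap.ker_eq_bot, LinearMap.ker_eq_bot']
    intro z hz
    have : π (z : R) = 0 := hz
    have := hinj (z : R) z.2 this
    exact Subtype.ext this
  have hmapinj : Function.Injective
      (TensorProduct.map (π' ∘ₗ V.subtype) (π' ∘ₗ V.subtype)) := by
    rw [← LinearMap.rTensor_comp_lTensor]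
    exact (Module.Flat.rTensor_preserves_injective_linearMap _ hπV).comp
      (Module.Flat.lTensor_preserves_injective_linearMap _ hπV)
  -- conclude y = 0
  obtain ⟨w, hw⟩ := hyV
  have hw0 : TensorProduct.map (π' ∘ₗ V.subtype) (π' ∘ₗ V.subtype) w = 0 := by
    have hcomp := TensorProduct.map_comp π' π' V.subtype V.subtype
    rw [LinearMap.congr_fun hcomp w]
    simp only [LinearMap.coe_comp, Function.comp_apply]
    rw [hw, hπy]
  have hwz : w = 0 := hmapinj (by rw [hw0, map_zero])
  have hy0 : y = 0 := by rw [← hw, hwz, map_zero]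
  rw [hsplit, h0mval, hm0val, hy0, add_zero, add_comm]
end

section
/- Suppose q is a primitive N-th root of unity in k for some N ≥ 1 (i.e. q^N = 1 and q^s ≠ 1 for 1 ≤ s < N), and suppose x^N = 0. Then y_N = 0. (In particular, in a braided vector space of diagonal type, if x_i^N = 0 and q_{ii} has order N, then (ad_c x_i)^N(x_j) = 0 for every j.) -/
/-- The `m`-fold iterated `q`-twisted adjoint action of `x` on `y`:
`y_0 = y`, `y_{m+1} = x·y_m − q^m·λ·y_m·x`. -/
def qTwistedAd {k A : Type*} [Field k] [Ring A] [Algebra k A]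
    (x y : A) (q lam : k) : ℕ → A
  | 0 => y
  | m + 1 => x * qTwistedAd x y q lam m - (q ^ m * lam) • (qTwistedAd x y q lam m * x)

open Finset in
/-- Factorization `∏_{j<N} (a - q^j • b) = a^N - b^N` for commuting variables, given a
primitive `N`-th root of unity `q`. -/
lemma prod_sub_pow_smul {k : Type*} [Field k] {q : k} {N : ℕ} (hN : 0 < N)
    (hq : IsPrimitiveRoot q N) {R : Type*} [CommRing R] [Algebra k R] (a b : R) :
    ∏ j ∈ Finset.range N, (a - (q ^ j) • b) = a ^ N - b ^ N := by
  classical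
  have hC : Function.Injective (MvPolynomial.C : k →+* MvPolynomial (Fin 2) k) :=
    MvPolynomial.C_injective _ _
  have hqM : IsPrimitiveRoot (MvPolynomial.C q : MvPolynomial (Fin 2) k) N :=
    hq.map_of_injective hC
  have hroots : Polynomial.nthRootsFinset N (1 : MvPolynomial (Fin 2) k)
      = (Finset.range N).image (fun j => (MvPolynomial.C q : MvPolynomial (Fin 2) k) ^ j) := by
    symm
    apply Finset.eq_of_subset_of_card_le
    · intro z hz
      simp only [Finset.mem_image, Finset.mem_range] at hz
      obtain ⟨j, hj, rfl⟩ := hz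
      rw [Polynomial.mem_nthRootsFinset hN 1, ← pow_mul, mul_comm, pow_mul, hqM.pow_eq_one, one_pow]
    · rw [hqM.card_nthRootsFinset, Finset.card_image_of_injOn hqM.injOn_pow, Finset.card_range]
  have key : (MvPolynomial.X 0 : MvPolynomial (Fin 2) k) ^ N - (MvPolynomial.X 1) ^ N
      = ∏ j ∈ Finset.range N,
          (MvPolynomial.X 0 - (MvPolynomial.C q : MvPolynomial (Fin 2) k) ^ j
            * MvPolynomial.X 1) := by
    rw [hqM.pow_sub_pow_eq_prod_sub_mul (x := MvPolynomial.X 0) (y := MvPolynomial.X 1) hN, hroots,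
      Finset.prod_image hqM.injOn_pow]
  have h2 := congrArg (MvPolynomial.aeval (R := k) ![a, b]) key
  simp only [map_sub, map_pow, map_prod, map_mul, MvPolynomial.aeval_X, MvPolynomial.aeval_C,
    Matrix.cons_val_zero, Matrix.cons_val_one, Matrix.head_cons] at h2
  rw [h2]
  refine Finset.prod_congr rfl fun j _ => ?_
  rw [Algebra.smul_def, map_pow]

/-- If `q` is a primitive `N`-th root of unity and `x^N = 0`, then `y_N = 0`.
(In a braided vector space of diagonal type: if `x_i^N = 0` and `q_{ii}` has order `N`,
then `(ad_c x_i)^N (x_j) = 0`.) -/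
theorem qTwistedAd_root_of_unity {k A : Type*} [Field k] [Ring A] [Algebra k A]
    (x y : A) (q lam : kˣ) (N : ℕ) (hN : 1 ≤ N)
    (hqN : (q : k) ^ N = 1) (hprim : ∀ s : ℕ, 1 ≤ s → s < N → (q : k) ^ s ≠ 1)
    (hx : x ^ N = 0) :
    qTwistedAd x y (q : k) (lam : k) N = 0 := by
  -- `q` is a primitive root of unity
  have hq : IsPrimitiveRoot (q : k) N := by
    refine ⟨hqN, fun l hl => ?_⟩
    by_contra hndvd
    have hmod : (q : k) ^ (l % N) = 1 := by
      conv_lhs at hl => rw [← Nat.div_add_mod l N]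
      rwa [pow_add, pow_mul, hqN, one_pow, one_mul] at hl
    have hlt : l % N < N := Nat.mod_lt _ (by omega)
    have hge : 1 ≤ l % N := by
      rcases Nat.eq_zero_or_pos (l % N) with h0 | h0
      · exact absurd (Nat.dvd_of_mod_eq_zero h0) hndvd
      · exact h0
    exact hprim _ hge hlt hmod
  -- set up the commuting left/right multiplication operators
  set E := Module.End k A with hE
  set L : E := LinearMap.mulLeft k x with hL
  set B : E := (lam : k) • LinearMap.mulRight k x with hB
  have hcommLB : Commute L B :=
    (LinearMap.commute_mulLeft_right x x).smul_right (lam : k)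
  -- evaluation of two-variable polynomials at `(L, B)`
  set f : Polynomial k →ₐ[k] E :=
    Polynomial.eval₂AlgHom (Algebra.ofId k E) B (fun c => Algebra.commutes c B) with hf
  have hfB : f Polynomial.X = B := Polynomial.eval₂_X _ _
  have hfL : ∀ p : Polynomial k, Commute (f p) L := by
    intro p
    induction p using Polynomial.induction_on' with
    | add p r hp hr => rw [map_add]; exact hp.add_left hr
    | monomial n c =>
      have : f ((Polynomial.monomial n) c) = algebraMap k E c * B ^ n := by
        show Polynomial.eval₂ _ B ((Polynomial.monomial n) c) = _
        rw [Polynomial.eval₂_monomial]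
        rfl
      rw [this]
      exact Commute.mul_left (Algebra.commutes c L) (hcommLB.symm.pow_left n)
  set Φ : Polynomial (Polynomial k) →ₐ[k] E := Polynomial.eval₂AlgHom f L hfL with hΦ
  set a : Polynomial (Polynomial k) := Polynomial.X with ha
  set b : Polynomial (Polynomial k) := Polynomial.C Polynomial.X with hb
  have hΦa : Φ a = L := Polynomial.eval₂_X _ _
  have hΦb : Φ b = B := by
    show Polynomial.eval₂ _ L (Polynomial.C Polynomial.X) = B
    rw [Polynomial.eval₂_C]
    exact hfB
  -- the iterated adjoint action is given by applying the image of the product of the factors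
  have hrec : ∀ m, qTwistedAd x y (q : k) (lam : k) m
      = Φ (∏ j ∈ Finset.range m, (a - ((q : k) ^ j) • b)) y := by
    intro m
    induction m with
    | zero =>
      show y = (Φ (∏ j ∈ Finset.range 0, (a - ((q : k) ^ j) • b))) y
      rw [Finset.prod_range_zero, map_one]
      exact (Module.End.one_apply y).symm
    | succ m ih =>
      rw [Finset.prod_range_succ, mul_comm, map_mul, Module.End.mul_apply, ← ih]
      show x * qTwistedAd x y (q : k) (lam : k) m
          - ((q : k) ^ m * (lam : k)) • (qTwistedAd x y (q : k) (lam : k) m * x) = _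
      set z : A := qTwistedAd x y (q : k) (lam : k) m
      rw [map_sub, map_smul, hΦa, hΦb, LinearMap.sub_apply, LinearMap.smul_apply, hL, hB,
        LinearMap.mulLeft_apply, LinearMap.smul_apply, LinearMap.mulRight_apply, smul_smul]
  rw [hrec N, prod_sub_pow_smul hN hq a b, map_sub, map_pow, map_pow, hΦa, hΦb,
    LinearMap.sub_apply]
  have hLN : L ^ N = LinearMap.mulLeft k (x ^ N) := LinearMap.pow_mulLeft k A x N
  have hBN : B ^ N = ((lam : k) ^ N) • LinearMap.mulRight k (x ^ N) := by
    rw [hB, smul_pow, LinearMap.pow_mulRight k A x N]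
  rw [hLN, hBN, hx]
  simp
end

section
/- (Decomposition of positive roots.) Given a Cartan scheme with a finite root system (Δ^X)_{X∈𝔛}, for every X ∈ 𝔛 and every positive root α ∈ Δ^X_+ which is not a simple root (i.e. α ∉ {α_i : i ∈ I}), there exist positive roots β, γ ∈ Δ^X_+ such that α = β + γ. -/
/-- The reflection `s_i^X : ℤ^I → ℤ^I` of a Cartan scheme with Cartan matrices `A`,
determined by `s_i^X(α_j) = α_j − a^X_{ij}·α_i`. -/
def cartanRefl {I X : Type*} [Fintype I] [DecidableEq I]
    (A : X → I → I → ℤ) (i : I) (x : X) (v : I → ℤ) : I → ℤ :=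
  v - (∑ j, A x i j * v j) • Pi.single i 1


/-- 2x2 determinant of a pair of integer vectors in the plane -/
def det2 (p q : ℤ × ℤ) : ℤ := p.1 * q.2 - q.1 * p.2

lemma det2_self (p : ℤ × ℤ) : det2 p p = 0 := by unfold det2; ring

lemma det2_sub_right (p q q' : ℤ × ℤ) : det2 p (q - q') = det2 p q - det2 p q' := by
  unfold det2; simp; ring

lemma det2_ne_zero_left {p q : ℤ × ℤ} (h : det2 p q = 1) : p ≠ 0 := by
  rintro rfl; simp [det2] at h

lemma det2_trans {p q w : ℤ × ℤ} (hp : 0 ≤ p.1 ∧ 0 ≤ p.2) (hq : 0 ≤ q.1 ∧ 0 ≤ q.2)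
    (hw : 0 ≤ w.1 ∧ 0 ≤ w.2) (hp0 : p ≠ 0) (h1 : 0 < det2 p q) (h2 : 0 < det2 q w) :
    0 < det2 p w := by
  have hid1 : det2 p w * q.1 = det2 p q * w.1 + det2 q w * p.1 := by
    unfold det2; ring
  have hid2 : det2 p w * q.2 = det2 p q * w.2 + det2 q w * p.2 := by
    unfold det2; ring
  have hpc : 0 < p.1 ∨ 0 < p.2 := by
    rcases p with ⟨p1, p2⟩
    simp only [Prod.mk.injEq] at hp0 ⊢
    simp at hp hp0 ⊢
    omega
  by_contra hle
  push_neg at hle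
  rcases hpc with hc | hc
  · nlinarith
  · nlinarith

/-- **Abstract frieze decomposition.** -/
lemma frieze_decomp : ∀ (M : ℕ) (θ : ℕ → ℤ × ℤ),
    θ 0 = (1, 0) → θ M = (0, 1) →
    (∀ n ≤ M, 0 ≤ (θ n).1 ∧ 0 ≤ (θ n).2) →
    (∀ n < M, det2 (θ n) (θ (n + 1)) = 1) →
    (∀ n, 1 ≤ n → n < M → ∃ c : ℤ, θ (n + 1) + θ (n - 1) = c • θ n) →
    ∀ k, 0 < k → k < M → ∃ s t, s ≤ M ∧ t ≤ M ∧ θ k = θ s + θ t := by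
  intro M
  induction M using Nat.strong_induction_on with
  | _ M ih =>
    intro θ h0 hM hpos hdet hrec k hk0 hkM
    have hM2 : 2 ≤ M := by omega
    have hne : ∀ n < M, θ n ≠ 0 := fun n hn => det2_ne_zero_left (hdet n hn)
    have hc1 : ∀ n, 1 ≤ n → n < M → ∀ c : ℤ, θ (n + 1) + θ (n - 1) = c • θ n → 1 ≤ c := by
      intro n hn1 hnM c hc
      by_contra hcle
      push_neg at hcle
      have hnz : θ (n + 1) ≠ 0 := by
        rcases eq_or_lt_of_le (Nat.succ_le_of_lt hnM) with h | h
        · rw [← h] at hM; rw [hM]; simp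
        · exact hne _ h
      have e1 : (θ (n+1)).1 + (θ (n-1)).1 = c * (θ n).1 := by
        have := congrArg Prod.fst hc; simpa using this
      have e2 : (θ (n+1)).2 + (θ (n-1)).2 = c * (θ n).2 := by
        have := congrArg Prod.snd hc; simpa using this
      have p1 := hpos (n+1) (by omega)
      have p2 := hpos (n-1) (by omega)
      have p3 := hpos n (by omega)
      have hz1 : (θ (n+1)).1 = 0 := by nlinarith [p1.1, p2.1, p3.1, p1.2, p2.2, p3.2]
      have hz2 : (θ (n+1)).2 = 0 := by nlinarith [p1.1, p2.1, p3.1, p1.2, p2.2, p3.2]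
      exact hnz (Prod.ext hz1 hz2)
    by_cases hex : ∃ s, 1 ≤ s ∧ s < M ∧ θ (s + 1) + θ (s - 1) = θ s
    · obtain ⟨s, hs1, hsM, hs⟩ := hex
      rcases eq_or_ne k s with rfl | hks
      · refine ⟨k + 1, k - 1, by omega, by omega, ?_⟩
        rw [← hs]
      · -- contract the chain at s and use the inductive hypothesis
        set θ' : ℕ → ℤ × ℤ := fun n => if n < s then θ n else θ (n + 1) with hθ'
        have key : ∀ n, θ' n = if n < s then θ n else θ (n + 1) := fun n => rfl
        have hstep : θ (s + 1) = θ s - θ (s - 1) := by rw [← hs]; abel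
        set M' := M - 1 with hM'
        have hM'lt : M' < M := by omega
        have h0' : θ' 0 = (1, 0) := by rw [key, if_pos (by omega : 0 < s)]; exact h0
        have hM'' : θ' M' = (0, 1) := by
          rw [key, if_neg (by omega : ¬ M' < s)]
          have : M' + 1 = M := by omega
          rw [this]; exact hM
        have hpos' : ∀ n ≤ M', 0 ≤ (θ' n).1 ∧ 0 ≤ (θ' n).2 := by
          intro n hn
          rw [key]
          split_ifs with h
          · exact hpos n (by omega)
          · exact hpos (n+1) (by omega)
        have hdet' : ∀ n < M', det2 (θ' n) (θ' (n + 1)) = 1 := by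
          intro n hn
          rcases lt_trichotomy (n+1) s with h | h | h
          · rw [key, key, if_pos (by omega), if_pos h]
            exact hdet n (by omega)
          · rw [key, key, if_pos (by omega), if_neg (by omega)]
            have h2 : n + 1 + 1 = s + 1 := by omega
            rw [h2, hstep, det2_sub_right]
            have e1 : det2 (θ n) (θ s) = 1 := by
              have h3 : s = n + 1 := by omega
              rw [h3]; exact hdet n (by omega)
            have e2 : det2 (θ n) (θ (s - 1)) = 0 := by
              have h4 : s - 1 = n := by omega
              rw [h4]; exact det2_self _
            rw [e1, e2]
            ring
          · rw [key, key, if_neg (by omega), if_neg (by omega)]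
            exact hdet (n+1) (by omega)
        have hrec' : ∀ n, 1 ≤ n → n < M' → ∃ c : ℤ, θ' (n + 1) + θ' (n - 1) = c • θ' n := by
          intro n hn1 hnM
          rcases lt_trichotomy (n+1) s with h | h | h
          · have e1 : θ' (n+1) = θ (n+1) := by rw [key, if_pos h]
            have e2 : θ' (n-1) = θ (n-1) := by rw [key, if_pos (by omega)]
            have e3 : θ' n = θ n := by rw [key, if_pos (by omega)]
            rw [e1, e2, e3]
            exact hrec n hn1 (by omega)
          · -- n + 1 = s
            have e1 : θ' (n+1) = θ (n+2) := by
              rw [key, if_neg (by omega)]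
            have e2 : θ' (n-1) = θ (n-1) := by rw [key, if_pos (by omega)]
            have e3 : θ' n = θ n := by rw [key, if_pos (by omega)]
            rw [e1, e2, e3]
            obtain ⟨c', hc'⟩ := hrec n hn1 (by omega)
            refine ⟨c' - 1, ?_⟩
            have h2 : n + 2 = s + 1 := by omega
            have h3 : θ n = θ (s - 1) := by congr 1; omega
            have h4 : θ s = θ (n + 1) := by congr 1; omega
            rw [h2, hstep, ← h3, h4, sub_smul, one_smul, ← hc']
            abel
          · -- s ≤ n
            have e1 : θ' (n+1) = θ (n+2) := by rw [key, if_neg (by omega)]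
            have e3 : θ' n = θ (n+1) := by rw [key, if_neg (by omega)]
            rcases eq_or_lt_of_le (by omega : s ≤ n) with hsn | hsn
            · -- n = s
              have e2 : θ' (n-1) = θ (n-1) := by rw [key, if_pos (by omega)]
              rw [e1, e2, e3]
              obtain ⟨c'', hc''⟩ := hrec (n+1) (by omega) (by omega)
              refine ⟨c'' - 1, ?_⟩
              have h6 : θ (n + 1 - 1) = θ (s + 1) + θ (s - 1) := by
                have hh : n + 1 - 1 = s := by omega
                rw [hh, ← hs]
              have h7 : θ (n - 1) = θ (s - 1) := by congr 1; omega
              have h8 : θ (n + 2) = c'' • θ (n + 1) - (θ (s + 1) + θ (s - 1)) := by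
                rw [← h6, ← hc'']; abel
              have h9 : θ (n + 1) = θ (s + 1) := by congr 1; omega
              rw [h7, h8, sub_smul, one_smul, h9]
              abel
            · -- s < n
              have e2 : θ' (n-1) = θ n := by
                rw [key, if_neg (by omega)]
                congr 1
                omega
              rw [e1, e2, e3]
              obtain ⟨c', hc'⟩ := hrec (n+1) (by omega) (by omega)
              refine ⟨c', ?_⟩
              have h10 : θ (n + 1 - 1) = θ n := by simp
              rw [h10] at hc'
              exact hc'
        set k' := if k < s then k else k - 1 with hk'
        have hk'0 : 0 < k' := by rw [hk']; split_ifs <;> omega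
        have hk'M : k' < M' := by rw [hk']; split_ifs <;> omega
        have hθ'k : θ' k' = θ k := by
          rw [hk']
          split_ifs with h
          · rw [key, if_pos h]
          · rw [key, if_neg (by omega)]
            congr 1
            omega
        obtain ⟨s', t', hs', ht', hsum⟩ := ih M' hM'lt θ' h0' hM'' hpos' hdet' hrec' k' hk'0 hk'M
        refine ⟨if s' < s then s' else s' + 1, if t' < s then t' else t' + 1,
          by split_ifs <;> omega, by split_ifs <;> omega, ?_⟩
        rw [← hθ'k, hsum, key, key]
        congr 1 <;> split_ifs <;> rfl
    · -- no ear: contradiction via monotonicity of the first coordinates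
      exfalso
      push_neg at hex
      have hθ1 : (θ 1).2 = 1 := by
        have := hdet 0 (by omega)
        rw [h0] at this
        unfold det2 at this
        simpa using this
      have hp1 : 1 ≤ (θ 1).1 := by
        rcases eq_or_lt_of_le (hpos 1 (by omega)).1 with h | h
        · exfalso
          have h2 := hdet 1 (by omega)
          unfold det2 at h2
          rw [hθ1, ← h] at h2
          have := (hpos 2 (by omega)).1
          nlinarith
        · omega
      have mono : ∀ n, 1 ≤ n → n ≤ M → (θ (n-1)).1 ≤ (θ n).1 ∧ 1 ≤ (θ n).1 := by
        intro n
        induction n with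
        | zero => omega
        | succ m ihm =>
          intro _ hm
          rcases Nat.eq_or_lt_of_le (by omega : 1 ≤ m + 1) with h1 | h1
          · have : m = 0 := by omega
            subst this
            constructor
            · rw [h0]; simpa using hp1
            · exact hp1
          · have hm1 : 1 ≤ m := by omega
            obtain ⟨ihA, ihB⟩ := ihm hm1 (by omega)
            obtain ⟨c, hc⟩ := hrec m hm1 (by omega)
            have hcge : 1 ≤ c := hc1 m hm1 (by omega) c hc
            have hcne : c ≠ 1 := by
              intro h1'
              rw [h1', one_smul] at hc
              exact hex m hm1 (by omega) hc
            have hc2 : 2 ≤ c := by omega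
            have e1 : (θ (m+1)).1 + (θ (m-1)).1 = c * (θ m).1 := by
              have := congrArg Prod.fst hc; simpa using this
            have h2 : m + 1 - 1 = m := by omega
            rw [h2]
            constructor
            · nlinarith
            · nlinarith
      have := (mono M (by omega) le_rfl).2
      rw [hM] at this
      simp at this

lemma det2_swap (p q : ℤ × ℤ) : det2 p q = - det2 q p := by unfold det2; ring

lemma det2_smul_sub (c : ℤ) (p q : ℤ × ℤ) :
    det2 p (c • p - q) = - det2 p q := by
  unfold det2
  simp [Prod.smul_fst, Prod.smul_snd]
  ring

set_option linter.unusedSectionVars false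
set_option linter.unusedVariables false
section CH

variable {I X : Type*} [Fintype I] [DecidableEq I]

/-- positivity of an integer vector -/
def PosV (v : I → ℤ) : Prop := ∀ k, 0 ≤ v k

/-- nonpositivity -/
def NegV (v : I → ℤ) : Prop := ∀ k, v k ≤ 0

lemma posV_add {u v : I → ℤ} (hu : PosV u) (hv : PosV v) : PosV (u + v) := by
  intro k; have := hu k; have := hv k; simp [Pi.add_apply]; omega

lemma posV_smul {u : I → ℤ} (hu : PosV u) {c : ℤ} (hc : 0 ≤ c) : PosV (c • u) := by
  intro k; have := hu k; simpa using mul_nonneg hc (hu k)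

lemma posV_neg_iff {u : I → ℤ} : PosV (-u) ↔ NegV u := by
  constructor <;> intro h k <;> have := h k <;> simp at * <;> omega

lemma posV_negV_zero {u : I → ℤ} (h1 : PosV u) (h2 : NegV u) : u = 0 := by
  funext k; have := h1 k; have := h2 k; simp; omega

lemma single_ne_zero' (i : I) : (Pi.single i 1 : I → ℤ) ≠ 0 := by
  intro h
  have := congrFun h i
  simp at this

lemma posV_single (i : I) : PosV (Pi.single i 1 : I → ℤ) := by
  intro k
  rcases eq_or_ne k i with rfl | h
  · simp
  · simp [Pi.single_apply, h]

variable (A : X → I → I → ℤ)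

lemma cartanRefl_apply (i : I) (x : X) (v : I → ℤ) (k : I) :
    cartanRefl A i x v k = v k - (∑ j, A x i j * v j) * (Pi.single i 1 : I → ℤ) k := by
  simp [cartanRefl]

lemma cartanRefl_apply_ne (i : I) (x : X) (v : I → ℤ) {k : I} (h : k ≠ i) :
    cartanRefl A i x v k = v k := by
  simp [cartanRefl_apply, Pi.single_apply, h]

lemma cartanRefl_apply_self (i : I) (x : X) (v : I → ℤ) :
    cartanRefl A i x v i = v i - (∑ j, A x i j * v j) := by
  simp [cartanRefl_apply, Pi.single_apply]

lemma cartanRefl_add (i : I) (x : X) (u v : I → ℤ) :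
    cartanRefl A i x (u + v) = cartanRefl A i x u + cartanRefl A i x v := by
  unfold cartanRefl
  have : (∑ j, A x i j * (u + v) j) = (∑ j, A x i j * u j) + (∑ j, A x i j * v j) := by
    rw [← Finset.sum_add_distrib]
    refine Finset.sum_congr rfl fun j _ => by simp [Pi.add_apply]; ring
  rw [this, add_smul]
  abel

lemma cartanRefl_smul (i : I) (x : X) (c : ℤ) (v : I → ℤ) :
    cartanRefl A i x (c • v) = c • cartanRefl A i x v := by
  unfold cartanRefl
  have : (∑ j, A x i j * (c • v) j) = c * (∑ j, A x i j * v j) := by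
    rw [Finset.mul_sum]
    refine Finset.sum_congr rfl fun j _ => by simp; ring
  rw [this, smul_sub, mul_smul]

lemma cartanRefl_neg (i : I) (x : X) (v : I → ℤ) :
    cartanRefl A i x (-v) = - cartanRefl A i x v := by
  have := cartanRefl_smul A i x (-1) v
  simpa using this

variable (hAdiag : ∀ x i, A x i i = 2)

include hAdiag in
lemma cartanRefl_single_self (i : I) (x : X) :
    cartanRefl A i x (Pi.single i 1) = - Pi.single i 1 := by
  unfold cartanRefl
  have : (∑ j, A x i j * (Pi.single i 1 : I → ℤ) j) = 2 := by
    rw [Finset.sum_eq_single i]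
    · simp [hAdiag]
    · intro b _ hb; simp [Pi.single_apply, Ne.symm hb]
    · intro h; exact absurd (Finset.mem_univ i) h
  rw [this]
  module

lemma cartanRefl_single_ne (i : I) (x : X) {l : I} (h : l ≠ i) :
    cartanRefl A i x (Pi.single l 1) = Pi.single l 1 - (A x i l) • Pi.single i 1 := by
  unfold cartanRefl
  have : (∑ j, A x i j * (Pi.single l 1 : I → ℤ) j) = A x i l := by
    rw [Finset.sum_eq_single l]
    · simp
    · intro b _ hb; simp [Pi.single_apply, Ne.symm hb]
    · intro h; exact absurd (Finset.mem_univ l) h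
  rw [this]

include hAdiag in
lemma cartanRefl_invol (i : I) (x : X) (v : I → ℤ) :
    cartanRefl A i x (cartanRefl A i x v) = v := by
  have h2 : (∑ j, A x i j * (Pi.single i 1 : I → ℤ) j) = 2 := by
    rw [Finset.sum_eq_single i]
    · simp [hAdiag]
    · intro b _ hb; simp [Pi.single_apply, Ne.symm hb]
    · intro h; exact absurd (Finset.mem_univ i) h
  set c : ℤ := ∑ j, A x i j * v j with hc
  have hw : cartanRefl A i x v = v - c • Pi.single i 1 := rfl
  have hcw : (∑ j, A x i j * (cartanRefl A i x v) j) = -c := by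
    rw [hw]
    have : ∀ j, A x i j * (v - c • (Pi.single i 1 : I → ℤ)) j
        = A x i j * v j - c * (A x i j * (Pi.single i 1 : I → ℤ) j) := by
      intro j
      have : (v - c • (Pi.single i 1 : I → ℤ)) j = v j - c * (Pi.single i 1 : I → ℤ) j := by
        simp
      rw [this]; ring
    rw [Finset.sum_congr rfl (fun j _ => this j), Finset.sum_sub_distrib, ← Finset.mul_sum, h2]
    rw [← hc]; ring
  show cartanRefl A i x v - (∑ j, A x i j * (cartanRefl A i x v) j) • Pi.single i 1 = v
  rw [hcw, hw]
  module

variable (r : I → X → X) (Δ : X → Set (I → ℤ))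
variable (hr : ∀ i x, r i (r i x) = x)
variable (hAoff : ∀ x i j, i ≠ j → A x i j ≤ 0)
variable (hAr : ∀ x i j, A x i j = A (r i x) i j)
variable (hfin : ∀ x, (Δ x).Finite)
variable (hposneg : ∀ x, Δ x = (Δ x ∩ {v | ∀ i, 0 ≤ v i}) ∪ (-(Δ x ∩ {v | ∀ i, 0 ≤ v i})))
variable (hsimple : ∀ x i, Δ x ∩ {v | ∃ z : ℤ, v = z • Pi.single i 1} =
        {Pi.single i 1, -Pi.single i 1})
variable (hrefl : ∀ x i, cartanRefl A i x '' Δ x = Δ (r i x))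

include hposneg in
lemma root_dichotomy {x : X} {v : I → ℤ} (hv : v ∈ Δ x) : PosV v ∨ NegV v := by
  rw [hposneg x] at hv
  rcases hv with h | h
  · exact Or.inl h.2
  · right
    rcases Set.mem_neg.mp h with h'
    intro k
    have := h'.2 k
    simp only [Pi.neg_apply] at this
    omega

include hsimple in
lemma single_mem_root (x : X) (i : I) : (Pi.single i 1 : I → ℤ) ∈ Δ x := by
  have : (Pi.single i 1 : I → ℤ) ∈ ({Pi.single i 1, -Pi.single i 1} : Set (I → ℤ)) := by
    left; rfl
  rw [← hsimple x i] at this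
  exact this.1

include hsimple in
lemma zero_not_root [Nonempty I] (x : X) : (0 : I → ℤ) ∉ Δ x := by
  intro h0
  obtain ⟨i⟩ := ‹Nonempty I›
  have : (0 : I → ℤ) ∈ Δ x ∩ {v | ∃ z : ℤ, v = z • Pi.single i 1} :=
    ⟨h0, ⟨0, by simp⟩⟩
  rw [hsimple x i] at this
  rcases this with h | h
  · exact single_ne_zero' i h.symm
  · have := congrFun h i
    simp at this

include hsimple in
lemma root_on_line {x : X} {v : I → ℤ} {i : I} (hv : v ∈ Δ x)
    (hline : ∀ k, k ≠ i → v k = 0) : v = Pi.single i 1 ∨ v = -Pi.single i 1 := by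
  have : v ∈ Δ x ∩ {v | ∃ z : ℤ, v = z • Pi.single i 1} := by
    refine ⟨hv, ⟨v i, funext fun k => ?_⟩⟩
    rcases eq_or_ne k i with rfl | h
    · simp
    · simp [Pi.single_apply, h, hline k h]
  rw [hsimple x i] at this
  exact this

include hrefl in
lemma refl_mem {x : X} {v : I → ℤ} (i : I) (hv : v ∈ Δ x) :
    cartanRefl A i x v ∈ Δ (r i x) := by
  rw [← hrefl x i]
  exact ⟨v, hv, rfl⟩

include hAdiag hrefl in
lemma refl_mem' {x : X} {v : I → ℤ} (i : I) (hv : v ∈ Δ (r i x)) :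
    cartanRefl A i x v ∈ Δ x := by
  rw [← hrefl x i] at hv
  obtain ⟨u, hu, rfl⟩ := hv
  rw [cartanRefl_invol A hAdiag]
  exact hu

include hAdiag hposneg hsimple hrefl in
lemma refl_flip {x : X} {v : I → ℤ} (i : I) (hv : v ∈ Δ x) (hpos : PosV v)
    (hne : v ≠ Pi.single i 1) : PosV (cartanRefl A i x v) := by
  have hw : cartanRefl A i x v ∈ Δ (r i x) := refl_mem A r Δ hrefl i hv
  rcases root_dichotomy _ hposneg hw with h | h
  · exact h
  · exfalso
    have hline : ∀ k, k ≠ i → v k = 0 := by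
      intro k hk
      have h1 := h k
      rw [cartanRefl_apply_ne A i x v hk] at h1
      have := hpos k
      omega
    rcases root_on_line Δ hsimple hv hline with h' | h'
    · exact hne h'
    · have := hpos i
      rw [h'] at this
      simp at this

include hAdiag hposneg hsimple hrefl in
lemma refl_flip' {x : X} {v : I → ℤ} (i : I) (hv : v ∈ Δ (r i x)) (hpos : PosV v)
    (hne : v ≠ Pi.single i 1) : PosV (cartanRefl A i x v) := by
  have hw : cartanRefl A i x v ∈ Δ x := refl_mem' A hAdiag r Δ hrefl i hv
  rcases root_dichotomy _ hposneg hw with h | h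
  · exact h
  · exfalso
    have hline : ∀ k, k ≠ i → v k = 0 := by
      intro k hk
      have h1 := h k
      rw [cartanRefl_apply_ne A i x v hk] at h1
      have := hpos k
      omega
    rcases root_on_line Δ hsimple hv hline with h' | h'
    · exact hne h'
    · have := hpos i
      rw [h'] at this
      simp at this


/-! ### Words of the Weyl groupoid -/

variable [Nonempty I]

/-- the source object of a word (read from the target `x`). -/
def srcObj : List I → X → X
  | [], x => x
  | k :: t, x => r k (srcObj t x)

/-- the linear action of a word, mapping `Δ (srcObj L x)` to `Δ x`. -/
def wmap : List I → X → (I → ℤ) → (I → ℤ)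
  | [], _ => id
  | k :: t, x => wmap t x ∘ cartanRefl A k (srcObj r t x)

/-- the inverse action of a word. -/
def gmap : List I → X → (I → ℤ) → (I → ℤ)
  | [], _ => id
  | k :: t, x => cartanRefl A k (srcObj r t x) ∘ gmap t x

@[simp] lemma srcObj_nil (x : X) : srcObj r [] x = x := rfl
@[simp] lemma srcObj_cons (k : I) (t : List I) (x : X) :
    srcObj r (k :: t) x = r k (srcObj r t x) := rfl
@[simp] lemma wmap_nil (x : X) (v : I → ℤ) : wmap A r [] x v = v := rfl
lemma wmap_cons (k : I) (t : List I) (x : X) (v : I → ℤ) :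
    wmap A r (k :: t) x v = wmap A r t x (cartanRefl A k (srcObj r t x) v) := rfl
@[simp] lemma gmap_nil (x : X) (v : I → ℤ) : gmap A r [] x v = v := rfl
lemma gmap_cons (k : I) (t : List I) (x : X) (v : I → ℤ) :
    gmap A r (k :: t) x v = cartanRefl A k (srcObj r t x) (gmap A r t x v) := rfl

include hAdiag hrefl in
lemma wmap_mem {x : X} (L : List I) {v : I → ℤ} (hv : v ∈ Δ (srcObj r L x)) :
    wmap A r L x v ∈ Δ x := by
  induction L generalizing v with
  | nil => exact hv
  | cons k t ih =>
      rw [wmap_cons]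
      exact ih (refl_mem' A hAdiag r Δ hrefl k hv)

include hrefl in
lemma gmap_mem {x : X} (L : List I) {v : I → ℤ} (hv : v ∈ Δ x) :
    gmap A r L x v ∈ Δ (srcObj r L x) := by
  induction L generalizing v with
  | nil => exact hv
  | cons k t ih =>
      rw [gmap_cons]
      exact refl_mem A r Δ hrefl k (ih hv)

include hAdiag in
lemma wmap_gmap (L : List I) (x : X) (v : I → ℤ) :
    wmap A r L x (gmap A r L x v) = v := by
  induction L generalizing v with
  | nil => rfl
  | cons k t ih =>
      rw [gmap_cons, wmap_cons, cartanRefl_invol A hAdiag, ih]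

include hAdiag in
lemma gmap_wmap (L : List I) (x : X) (v : I → ℤ) :
    gmap A r L x (wmap A r L x v) = v := by
  induction L generalizing v with
  | nil => rfl
  | cons k t ih =>
      rw [gmap_cons, wmap_cons, ih, cartanRefl_invol A hAdiag]

lemma wmap_add (L : List I) (x : X) (u v : I → ℤ) :
    wmap A r L x (u + v) = wmap A r L x u + wmap A r L x v := by
  induction L generalizing u v with
  | nil => rfl
  | cons k t ih => rw [wmap_cons, wmap_cons, wmap_cons, cartanRefl_add, ih]

lemma wmap_smul (L : List I) (x : X) (c : ℤ) (v : I → ℤ) :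
    wmap A r L x (c • v) = c • wmap A r L x v := by
  induction L generalizing v with
  | nil => rfl
  | cons k t ih => rw [wmap_cons, wmap_cons, cartanRefl_smul, ih]

lemma wmap_neg (L : List I) (x : X) (v : I → ℤ) :
    wmap A r L x (-v) = - wmap A r L x v := by
  have := wmap_smul A r L x (-1) v
  simpa using this

include hAdiag in
lemma wmap_inj (L : List I) (x : X) {u v : I → ℤ}
    (h : wmap A r L x u = wmap A r L x v) : u = v := by
  have := congrArg (gmap A r L x) h
  rwa [gmap_wmap A hAdiag, gmap_wmap A hAdiag] at this

lemma vec_repr (v : I → ℤ) : v = ∑ k, v k • (Pi.single k 1 : I → ℤ) := by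
  funext l
  rw [Finset.sum_apply]
  rw [Finset.sum_eq_single l]
  · simp
  · intro b _ hb
    simp [Pi.single_apply, Ne.symm hb]
  · intro h; exact absurd (Finset.mem_univ l) h

lemma wmap_zero (L : List I) (x : X) : wmap A r L x 0 = 0 := by
  have := wmap_smul A r L x 0 0
  simpa using this

lemma wmap_sum {κ : Type*} (L : List I) (x : X) (s : Finset κ) (f : κ → (I → ℤ)) :
    wmap A r L x (∑ k ∈ s, f k) = ∑ k ∈ s, wmap A r L x (f k) := by
  classical
  induction s using Finset.induction_on with
  | empty => simpa using wmap_zero A r L x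
  | insert _ _ hk ih =>
      rw [Finset.sum_insert hk, Finset.sum_insert hk, wmap_add, ih]

lemma wmap_repr (L : List I) (x : X) (v : I → ℤ) :
    wmap A r L x v = ∑ k, v k • wmap A r L x (Pi.single k 1) := by
  calc wmap A r L x v = wmap A r L x (∑ k, v k • (Pi.single k 1 : I → ℤ)) := by
        rw [← vec_repr]
    _ = ∑ k, wmap A r L x (v k • (Pi.single k 1 : I → ℤ)) := wmap_sum A r L x _ _
    _ = ∑ k, v k • wmap A r L x (Pi.single k 1) :=
        Finset.sum_congr rfl fun k _ => wmap_smul A r L x _ _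

/-- Negative set of a word -/
def NegS (L : List I) (x : X) : Set (I → ℤ) :=
  {v | v ∈ Δ (srcObj r L x) ∧ PosV v ∧ ¬ PosV (wmap A r L x v)}

/-- Positive set of a word -/
def PosS (L : List I) (x : X) : Set (I → ℤ) :=
  {v | v ∈ Δ (srcObj r L x) ∧ PosV v ∧ PosV (wmap A r L x v)}

include hfin in
lemma NegS_finite (L : List I) (x : X) : (NegS A r Δ L x).Finite :=
  (hfin _).subset fun v hv => hv.1

include hfin in
lemma PosS_finite (L : List I) (x : X) : (PosS A r Δ L x).Finite :=
  (hfin _).subset fun v hv => hv.1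

include hAdiag in
lemma refl_inj (k : I) (z : X) : Function.Injective (cartanRefl A k z) := by
  intro a b h
  have := congrArg (cartanRefl A k z) h
  rwa [cartanRefl_invol A hAdiag, cartanRefl_invol A hAdiag] at this

include hAdiag hposneg hsimple hrefl hfin in
lemma NegS_cons_lt {x : X} (L : List I) (k : I)
    (hk : ¬ PosV (wmap A r L x (Pi.single k 1))) :
    (NegS A r Δ (k :: L) x).ncard < (NegS A r Δ L x).ncard := by
  set z := srcObj r L x with hz
  set φ := cartanRefl A k z with hφ
  have hwk : wmap A r L x (Pi.single k 1) ∈ Δ x :=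
    wmap_mem A hAdiag r Δ hrefl L (single_mem_root Δ hsimple z k)
  have hek : (Pi.single k 1 : I → ℤ) ∈ NegS A r Δ L x :=
    ⟨single_mem_root Δ hsimple z k, posV_single k, hk⟩
  have himg : NegS A r Δ (k :: L) x = φ '' (NegS A r Δ L x \ {Pi.single k 1}) := by
    ext v
    constructor
    · rintro ⟨hvΔ, hvp, hvw⟩
      have hvΔ' : v ∈ Δ (r k z) := hvΔ
      have hne : v ≠ Pi.single k 1 := by
        rintro rfl
        rw [wmap_cons, cartanRefl_single_self A hAdiag, wmap_neg] at hvw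
        rcases root_dichotomy _ hposneg hwk with h | h
        · exact hk h
        · exact hvw (posV_neg_iff.mpr h)
      refine ⟨φ v, ⟨⟨refl_mem' A hAdiag r Δ hrefl k hvΔ',
        refl_flip' A hAdiag r Δ hposneg hsimple hrefl k hvΔ' hvp hne, ?_⟩, ?_⟩, ?_⟩
      · rw [wmap_cons] at hvw; exact hvw
      · intro hmem
        rw [Set.mem_singleton_iff] at hmem
        have h2 : v = φ (Pi.single k 1) := by
          rw [← hmem, hφ, cartanRefl_invol A hAdiag]
        rw [hφ, cartanRefl_single_self A hAdiag] at h2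
        have h3 := hvp k
        rw [h2] at h3
        simp at h3
      · rw [hφ, cartanRefl_invol A hAdiag]
    · rintro ⟨u, ⟨⟨huΔ, hup, huw⟩, hune⟩, rfl⟩
      rw [Set.mem_singleton_iff] at hune
      refine ⟨refl_mem A r Δ hrefl k huΔ,
        refl_flip A hAdiag r Δ hposneg hsimple hrefl k huΔ hup hune, ?_⟩
      rw [wmap_cons, cartanRefl_invol A hAdiag]
      exact huw
  rw [himg, Set.ncard_image_of_injective _ (refl_inj A hAdiag k z),
    Set.ncard_diff_singleton_of_mem hek]
  have hpos : 0 < (NegS A r Δ L x).ncard :=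
    Set.ncard_pos (NegS_finite A r Δ hfin L x) |>.mpr ⟨_, hek⟩
  omega

include hAdiag hposneg hsimple hrefl hfin in
lemma PosS_cons_lt {x : X} (L : List I) (k : I)
    (hk : PosV (wmap A r L x (Pi.single k 1))) :
    (PosS A r Δ (k :: L) x).ncard < (PosS A r Δ L x).ncard := by
  set z := srcObj r L x with hz
  set φ := cartanRefl A k z with hφ
  have hwk : wmap A r L x (Pi.single k 1) ∈ Δ x :=
    wmap_mem A hAdiag r Δ hrefl L (single_mem_root Δ hsimple z k)
  have hwk0 : wmap A r L x (Pi.single k 1) ≠ 0 := by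
    intro h0; rw [h0] at hwk; exact zero_not_root Δ hsimple x hwk
  have hek : (Pi.single k 1 : I → ℤ) ∈ PosS A r Δ L x :=
    ⟨single_mem_root Δ hsimple z k, posV_single k, hk⟩
  have himg : PosS A r Δ (k :: L) x = φ '' (PosS A r Δ L x \ {Pi.single k 1}) := by
    ext v
    constructor
    · rintro ⟨hvΔ, hvp, hvw⟩
      have hvΔ' : v ∈ Δ (r k z) := hvΔ
      have hne : v ≠ Pi.single k 1 := by
        rintro rfl
        rw [wmap_cons, cartanRefl_single_self A hAdiag, wmap_neg] at hvw
        exact hwk0 (posV_negV_zero hk (posV_neg_iff.mp hvw))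
      refine ⟨φ v, ⟨⟨refl_mem' A hAdiag r Δ hrefl k hvΔ',
        refl_flip' A hAdiag r Δ hposneg hsimple hrefl k hvΔ' hvp hne, ?_⟩, ?_⟩, ?_⟩
      · rw [wmap_cons] at hvw; exact hvw
      · intro hmem
        rw [Set.mem_singleton_iff] at hmem
        have h2 : v = φ (Pi.single k 1) := by
          rw [← hmem, hφ, cartanRefl_invol A hAdiag]
        rw [hφ, cartanRefl_single_self A hAdiag] at h2
        have h3 := hvp k
        rw [h2] at h3
        simp at h3
      · rw [hφ, cartanRefl_invol A hAdiag]
    · rintro ⟨u, ⟨⟨huΔ, hup, huw⟩, hune⟩, rfl⟩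
      rw [Set.mem_singleton_iff] at hune
      refine ⟨refl_mem A r Δ hrefl k huΔ,
        refl_flip A hAdiag r Δ hposneg hsimple hrefl k huΔ hup hune, ?_⟩
      rw [wmap_cons, cartanRefl_invol A hAdiag]
      exact huw
  rw [himg, Set.ncard_image_of_injective _ (refl_inj A hAdiag k z),
    Set.ncard_diff_singleton_of_mem hek]
  have hpos : 0 < (PosS A r Δ L x).ncard :=
    Set.ncard_pos (PosS_finite A r Δ hfin L x) |>.mpr ⟨_, hek⟩
  omega

/-! ### Heights and the simple-image lemma -/

def htV (v : I → ℤ) : ℤ := ∑ k, v k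

lemma htV_nonneg {v : I → ℤ} (h : PosV v) : 0 ≤ htV v :=
  Finset.sum_nonneg fun k _ => h k

lemma htV_pos {v : I → ℤ} (h : PosV v) (h0 : v ≠ 0) : 1 ≤ htV v := by
  have h1 : htV v ≠ 0 := by
    intro hh
    apply h0
    funext k
    have := (Finset.sum_eq_zero_iff_of_nonneg (fun k _ => h k)).mp hh k (Finset.mem_univ k)
    simpa using this
  have := htV_nonneg h
  omega

lemma htV_one_single {v : I → ℤ} (h : PosV v) (h1 : htV v = 1) :
    ∃ k, v = Pi.single k 1 := by
  have hex : ∃ k, 1 ≤ v k := by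
    by_contra hno
    push_neg at hno
    have : v = 0 := by
      funext k; have := h k; have := hno k; simp; omega
    rw [this] at h1
    simp [htV] at h1
  obtain ⟨k, hk⟩ := hex
  have hsplit : v k + ∑ t ∈ Finset.univ.erase k, v t = htV v := by
    rw [htV, ← Finset.add_sum_erase _ _ (Finset.mem_univ k)]
  have herase_nonneg : 0 ≤ ∑ t ∈ Finset.univ.erase k, v t :=
    Finset.sum_nonneg fun t _ => h t
  have hvk : v k = 1 := by omega
  have herase : ∑ t ∈ Finset.univ.erase k, v t = 0 := by omega
  refine ⟨k, funext fun t => ?_⟩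
  rcases eq_or_ne t k with rfl | ht
  · simp [hvk]
  · have := (Finset.sum_eq_zero_iff_of_nonneg (fun t _ => h t)).mp herase t
      (Finset.mem_erase.mpr ⟨ht, Finset.mem_univ t⟩)
    simp [Pi.single_apply, ht, this]

lemma htV_sum {κ : Type*} (s : Finset κ) (f : κ → (I → ℤ)) :
    htV (∑ k ∈ s, f k) = ∑ k ∈ s, htV (f k) := by
  unfold htV
  have h1 : ∀ j, (∑ k ∈ s, f k) j = ∑ k ∈ s, f k j := fun j => Finset.sum_apply j s f
  rw [Finset.sum_congr rfl fun j (_ : j ∈ Finset.univ) => h1 j]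
  exact Finset.sum_comm

lemma htV_smul (c : ℤ) (v : I → ℤ) : htV (c • v) = c * htV v := by
  unfold htV
  rw [Finset.mul_sum]
  refine Finset.sum_congr rfl fun k _ => by simp

lemma single_inj {t t' : I} (h : (Pi.single t 1 : I → ℤ) = Pi.single t' 1) : t = t' := by
  by_contra hne
  have := congrFun h t
  simp [Pi.single_apply, Ne.symm hne] at this

include hAdiag hposneg hsimple hrefl in
lemma negS_empty_simple {x : X} (L : List I)
    (hempty : (NegS A r Δ L x) = ∅) (l : I) :
    ∃ t, wmap A r L x (Pi.single l 1) = Pi.single t 1 := by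
  set z := srcObj r L x with hz
  have hPP : ∀ v, v ∈ Δ z → PosV v → PosV (wmap A r L x v) := by
    intro v hv hvp
    by_contra hbad
    have : v ∈ NegS A r Δ L x := ⟨hv, hvp, hbad⟩
    rw [hempty] at this
    exact this
  have stepA : ∀ u, u ∈ Δ x → PosV u → ∃ v, v ∈ Δ z ∧ PosV v ∧ wmap A r L x v = u := by
    intro u hu hup
    have hv : gmap A r L x u ∈ Δ z := gmap_mem A r Δ hrefl L hu
    have hwv : wmap A r L x (gmap A r L x u) = u := wmap_gmap A hAdiag r L x u
    rcases root_dichotomy _ hposneg hv with h | h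
    · exact ⟨_, hv, h, hwv⟩
    · exfalso
      have hneg : (- gmap A r L x u) ∈ Δ z := by
        have : gmap A r L x u ∈ Δ z := hv
        have hmv : -(gmap A r L x u) ∈ Δ z := by
          rw [hposneg z] at this ⊢
          rcases this with h' | h'
          · right; simpa using h'
          · left; simpa using h'
        exact hmv
      have := hPP _ hneg (posV_neg_iff.mpr h)
      rw [wmap_neg, hwv] at this
      have : u = 0 := posV_negV_zero hup (by intro k; have := this k; simp at this; omega)
      rw [this] at hu
      exact zero_not_root Δ hsimple x hu
  have stepB : ∀ t : I, ∃ k, wmap A r L x (Pi.single k 1) = Pi.single t 1 := by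
    intro t
    obtain ⟨v, hv, hvp, hwv⟩ := stepA (Pi.single t 1) (single_mem_root Δ hsimple x t)
      (posV_single t)
    have hrep : wmap A r L x v = ∑ k, v k • wmap A r L x (Pi.single k 1) :=
      wmap_repr A r L x v
    have hht : (1 : ℤ) = ∑ k, v k * htV (wmap A r L x (Pi.single k 1)) := by
      have h1 : htV (wmap A r L x v) = 1 := by
        rw [hwv, htV]
        rw [Finset.sum_eq_single t]
        · simp
        · intro b _ hb; simp [Pi.single_apply, Ne.symm hb]
        · intro h; exact absurd (Finset.mem_univ t) h
      have hsum2 : ∑ k, htV (v k • wmap A r L x (Pi.single k 1))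
          = ∑ k, v k * htV (wmap A r L x (Pi.single k 1)) :=
        Finset.sum_congr rfl fun k _ => htV_smul _ _
      calc (1 : ℤ) = htV (wmap A r L x v) := h1.symm
        _ = htV (∑ k, v k • wmap A r L x (Pi.single k 1)) := by rw [← hrep]
        _ = ∑ k, htV (v k • wmap A r L x (Pi.single k 1)) := htV_sum _ _
        _ = ∑ k, v k * htV (wmap A r L x (Pi.single k 1)) := hsum2
    have hhk : ∀ k, 1 ≤ htV (wmap A r L x (Pi.single k 1)) := by
      intro k
      have hroot : wmap A r L x (Pi.single k 1) ∈ Δ x :=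
        wmap_mem A hAdiag r Δ hrefl L (single_mem_root Δ hsimple z k)
      refine htV_pos (hPP _ (single_mem_root Δ hsimple z k) (posV_single k)) ?_
      intro h0
      rw [h0] at hroot
      exact zero_not_root Δ hsimple x hroot
    have hsum_le : ∑ k, v k ≤ 1 := by
      calc ∑ k, v k ≤ ∑ k, v k * htV (wmap A r L x (Pi.single k 1)) := by
            refine Finset.sum_le_sum fun k _ => ?_
            have := hhk k
            have := hvp k
            nlinarith
        _ = 1 := hht.symm
    have hv0 : v ≠ 0 := by
      intro h0
      rw [h0, wmap_zero] at hwv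
      exact single_ne_zero' t hwv.symm
    have : htV v = 1 := by
      have := htV_pos hvp hv0
      have : htV v ≤ 1 := hsum_le
      omega
    obtain ⟨k, rfl⟩ := htV_one_single hvp this
    exact ⟨k, hwv⟩
  -- the map t ↦ k t is injective, hence surjective
  choose f hf using stepB
  have hinj : Function.Injective f := by
    intro t t' h
    have := hf t
    rw [h, hf t'] at this
    exact (single_inj this).symm
  have hsurj : Function.Surjective f := Finite.surjective_of_injective hinj
  obtain ⟨t, ht⟩ := hsurj l
  exact ⟨t, by rw [← ht]; exact hf t⟩

include hAdiag hposneg hsimple hrefl hfin in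
lemma negS_nonempty {x : X} (L : List I) (l : I) {α : I → ℤ}
    (hw : wmap A r L x (Pi.single l 1) = α) (hns : ∀ t, α ≠ Pi.single t 1) :
    0 < (NegS A r Δ L x).ncard := by
  rcases Set.eq_empty_or_nonempty (NegS A r Δ L x) with h | h
  · exfalso
    obtain ⟨t, ht⟩ := negS_empty_simple A hAdiag r Δ hposneg hsimple hrefl L h l
    exact hns t (by rw [← hw, ht])
  · exact Set.ncard_pos (NegS_finite A r Δ hfin L x) |>.mpr h

/-! ### Existence of words making a root simple, triples, and the main recursion -/

include hAdiag hposneg hsimple hrefl hfin in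
lemma exists_word_simple {x : X} {α : I → ℤ} (hα : α ∈ Δ x) (hpos : PosV α) :
    ∃ (L : List I) (l : I), wmap A r L x (Pi.single l 1) = α := by
  suffices H : ∀ n : ℕ, ∀ (L : List I) (β : I → ℤ), β ∈ Δ (srcObj r L x) → PosV β →
      wmap A r L x β = α → (PosS A r Δ L x).ncard ≤ n →
      ∃ (L : List I) (l : I), wmap A r L x (Pi.single l 1) = α by
    exact H _ [] α hα hpos rfl le_rfl
  intro n
  induction n using Nat.strong_induction_on with
  | _ n ih =>
    intro L β hβ hβp hwβ hcard
    by_cases hsimp : ∃ l, β = Pi.single l 1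
    · obtain ⟨l, rfl⟩ := hsimp; exact ⟨L, l, hwβ⟩
    · push_neg at hsimp
      have hk : ∃ k, PosV (wmap A r L x (Pi.single k 1)) := by
        by_contra hno
        push_neg at hno
        have hneg : ∀ k, NegV (wmap A r L x (Pi.single k 1)) := by
          intro k
          rcases root_dichotomy _ hposneg (wmap_mem A hAdiag r Δ hrefl L
            (single_mem_root Δ hsimple _ k)) with h | h
          · exact absurd h (hno k)
          · exact h
        have hnegα : NegV α := by
          rw [← hwβ, wmap_repr]
          intro t
          rw [Finset.sum_apply]
          refine Finset.sum_nonpos fun k _ => ?_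
          have h1 := hneg k t
          have h2 := hβp k
          simp only [Pi.smul_apply, smul_eq_mul]
          nlinarith
        have h0 : α = 0 := posV_negV_zero hpos hnegα
        rw [h0] at hα; exact zero_not_root Δ hsimple x hα
      obtain ⟨k, hk⟩ := hk
      have hlt := PosS_cons_lt A hAdiag r Δ hfin hposneg hsimple hrefl L k hk
      refine ih ((PosS A r Δ (k :: L) x).ncard) (by omega) (k :: L)
        (cartanRefl A k (srcObj r L x) β) (refl_mem A r Δ hrefl k hβ)
        (refl_flip A hAdiag r Δ hposneg hsimple hrefl k hβ hβp (hsimp k)) ?_ le_rfl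
      rw [wmap_cons, cartanRefl_invol A hAdiag]
      exact hwβ

/-- A *triple*: a word `L`, a pair `i ≠ j` and a nonsimple positive root of the source
object supported on `{i,j}` which is mapped to `α` by the word. -/
def IsTriple (x : X) (α : I → ℤ) (L : List I) (i j : I) (a b : ℤ) : Prop :=
  i ≠ j ∧ 1 ≤ a ∧ 1 ≤ b ∧
  (a • Pi.single i 1 + b • Pi.single j 1) ∈ Δ (srcObj r L x) ∧
  wmap A r L x (a • Pi.single i 1 + b • Pi.single j 1) = α

lemma plane_apply (a b : ℤ) (i j k : I) :
    (a • Pi.single i 1 + b • Pi.single j 1 : I → ℤ) k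
      = (if k = i then a else 0) + (if k = j then b else 0) := by
  simp [Pi.single_apply, mul_ite]

lemma posV_plane {a b : ℤ} (ha : 0 ≤ a) (hb : 0 ≤ b) (i j : I) :
    PosV (a • Pi.single i 1 + b • Pi.single j 1 : I → ℤ) := by
  intro k
  rw [plane_apply]
  split_ifs <;> omega

lemma IsTriple_swap {x : X} {α : I → ℤ} {L : List I} {i j : I} {a b : ℤ}
    (h : IsTriple A r Δ x α L i j a b) : IsTriple A r Δ x α L j i b a := by
  obtain ⟨hij, ha, hb, hmem, hw⟩ := h
  have hcomm : (b • Pi.single j 1 + a • Pi.single i 1 : I → ℤ)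
      = a • Pi.single i 1 + b • Pi.single j 1 := by abel
  exact ⟨hij.symm, hb, ha, by rw [hcomm]; exact hmem, by rw [hcomm]; exact hw⟩

include hAdiag hAoff hposneg hsimple hrefl hfin in
lemma exists_triple {x : X} {α : I → ℤ} (hpos : PosV α) (hns : ∀ t, α ≠ Pi.single t 1) :
    ∀ n : ℕ, ∀ (L : List I) (l : I), wmap A r L x (Pi.single l 1) = α →
      (NegS A r Δ L x).ncard ≤ n →
      ∃ L' i j a b, IsTriple A r Δ x α L' i j a b ∧
        (NegS A r Δ L' x).ncard < (NegS A r Δ L x).ncard := by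
  intro n
  induction n using Nat.strong_induction_on with
  | _ n ih =>
    intro L l hwl hcard
    set z := srcObj r L x with hz
    have hk : ∃ k, ¬ PosV (wmap A r L x (Pi.single k 1)) := by
      by_contra hno
      push_neg at hno
      have hne := negS_nonempty A hAdiag r Δ hfin hposneg hsimple hrefl L l hwl hns
      obtain ⟨v, hvΔ, hvp, hvw⟩ := (Set.ncard_pos (NegS_finite A r Δ hfin L x)).mp hne
        |>.imp fun v hv => hv
      apply hvw
      rw [wmap_repr]
      intro t
      rw [Finset.sum_apply]
      refine Finset.sum_nonneg fun k _ => ?_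
      have h1 := hno k t
      have h2 := hvp k
      simp only [Pi.smul_apply, smul_eq_mul]
      positivity
    obtain ⟨k, hk⟩ := hk
    have hkl : k ≠ l := by
      rintro rfl
      rw [hwl] at hk
      exact hk hpos
    have hlk : l ≠ k := hkl.symm
    have hAle : A z k l ≤ 0 := hAoff z k l hkl
    have hlt := NegS_cons_lt A hAdiag r Δ hfin hposneg hsimple hrefl L k hk
    by_cases hc : A z k l = 0
    · have hwl' : wmap A r (k :: L) x (Pi.single l 1) = α := by
        rw [wmap_cons, cartanRefl_single_ne A k z hlk, hc]
        simpa using hwl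
      obtain ⟨L', i, j, a, b, htrip, hlt'⟩ :=
        ih ((NegS A r Δ (k :: L) x).ncard) (by omega) (k :: L) l hwl' le_rfl
      exact ⟨L', i, j, a, b, htrip, lt_trans hlt' hlt⟩
    · refine ⟨k :: L, k, l, -A z k l, 1, ⟨hkl, by omega, le_rfl, ?_, ?_⟩, hlt⟩
      · have heq : ((-A z k l) • Pi.single k 1 + (1:ℤ) • Pi.single l 1 : I → ℤ)
            = cartanRefl A k z (Pi.single l 1) := by
          rw [cartanRefl_single_ne A k z hlk]
          module
        rw [heq]
        exact refl_mem A r Δ hrefl k (single_mem_root Δ hsimple z l)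
      · have heq : ((-A z k l) • Pi.single k 1 + (1:ℤ) • Pi.single l 1 : I → ℤ)
            = cartanRefl A k z (Pi.single l 1) := by
          rw [cartanRefl_single_ne A k z hlk]
          module
        rw [heq, wmap_cons, cartanRefl_invol A hAdiag]
        exact hwl

include hAdiag in
lemma refl_plane {z : X} {i j : I} (hji : j ≠ i) (a b : ℤ) :
    cartanRefl A i z (a • Pi.single i 1 + b • Pi.single j 1)
      = (-a - b * A z i j) • Pi.single i 1 + b • Pi.single j 1 := by
  rw [cartanRefl_add, cartanRefl_smul, cartanRefl_smul, cartanRefl_single_self A hAdiag,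
    cartanRefl_single_ne A i z hji]
  module

include hAdiag hAoff hposneg hsimple hrefl hfin in
lemma triple_step {x : X} {α : I → ℤ} (hpos : PosV α) (hns : ∀ t, α ≠ Pi.single t 1)
    {L : List I} {i j : I} {a b : ℤ}
    (ht : IsTriple A r Δ x α L i j a b)
    (hwi : ¬ PosV (wmap A r L x (Pi.single i 1))) :
    ∃ L' i' j' a' b', IsTriple A r Δ x α L' i' j' a' b' ∧
      (NegS A r Δ L' x).ncard < (NegS A r Δ L x).ncard := by
  obtain ⟨hij, ha, hb, hmem, hw⟩ := ht
  set z := srcObj r L x with hz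
  set γ : I → ℤ := a • Pi.single i 1 + b • Pi.single j 1 with hγ
  have hγp : PosV γ := posV_plane (by omega) (by omega) i j
  have hγne : γ ≠ Pi.single i 1 := by
    intro h
    have := congrFun h j
    rw [hγ, plane_apply] at this
    simp [hij.symm, Ne.symm hij, Pi.single_apply] at this
    omega
  have hlt := NegS_cons_lt A hAdiag r Δ hfin hposneg hsimple hrefl L i hwi
  have hγ'' : cartanRefl A i z γ = (-a - b * A z i j) • Pi.single i 1 + b • Pi.single j 1 :=
    refl_plane A hAdiag hij.symm a b
  have hmem'' : cartanRefl A i z γ ∈ Δ (srcObj r (i :: L) x) := refl_mem A r Δ hrefl i hmem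
  have hpos'' : PosV (cartanRefl A i z γ) :=
    refl_flip A hAdiag r Δ hposneg hsimple hrefl i hmem hγp hγne
  have hw'' : wmap A r (i :: L) x (cartanRefl A i z γ) = α := by
    rw [wmap_cons, cartanRefl_invol A hAdiag]
    exact hw
  set a' : ℤ := -a - b * A z i j with ha'
  have ha'0 : 0 ≤ a' := by
    have := hpos'' i
    rw [hγ'', plane_apply] at this
    simpa [hij] using this
  rcases eq_or_lt_of_le ha'0 with ha'eq | ha'pos
  · -- the reflected root is b • e_j, hence equals e_j ; restart from the pair
    have hline : cartanRefl A i z γ = Pi.single j 1 := by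
      have hone : ∀ k, k ≠ j → (cartanRefl A i z γ) k = 0 := by
        intro k hkj
        rw [hγ'', plane_apply, ← ha'eq]
        simp [hkj]
      rcases root_on_line Δ hsimple hmem'' hone with h | h
      · exact h
      · exfalso
        have := hpos'' j
        rw [h] at this
        simp at this
    obtain ⟨L', i', j', a'', b'', htrip, hlt'⟩ :=
      exists_triple A hAdiag r Δ hAoff hfin hposneg hsimple hrefl hpos hns
        ((NegS A r Δ (i :: L) x).ncard) (i :: L) j (by rw [← hline]; exact hw'') le_rfl
    exact ⟨L', i', j', a'', b'', htrip, lt_trans hlt' hlt⟩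
  · refine ⟨i :: L, i, j, a', b, ⟨hij, by omega, hb, ?_, ?_⟩, hlt⟩
    · rw [← hγ'']; exact hmem''
    · rw [← hγ'']; exact hw''

/-! ### The alternating rank-two sweep -/

def qf (i j : I) (n : ℕ) : I := if n % 2 = 0 then i else j

def altL (i j : I) : ℕ → List I
  | 0 => []
  | n + 1 => qf i j n :: altL i j n

def pvec (i j : I) (p : ℤ × ℤ) : I → ℤ := p.1 • Pi.single i 1 + p.2 • Pi.single j 1

def paSeq (z : X) (i j : I) : ℕ → ℤ × ℤ
  | 0 => (1, 0)
  | 1 => (- A z i j, 1)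
  | n + 2 => (- A (srcObj r (altL i j (n+1)) z) (qf i j (n+1)) (qf i j (n+2)))
      • paSeq z i j (n+1) - paSeq z i j n

def etaR (z : X) (i j : I) (n : ℕ) : I → ℤ :=
  wmap A r (altL i j n) z (Pi.single (qf i j n) 1)

@[simp] lemma altL_zero (i j : I) : altL i j 0 = [] := rfl
@[simp] lemma altL_succ (i j : I) (n : ℕ) : altL i j (n+1) = qf i j n :: altL i j n := rfl
@[simp] lemma qf_zero (i j : I) : qf i j 0 = i := rfl
@[simp] lemma qf_one (i j : I) : qf i j 1 = j := rfl

lemma qf_add_two (i j : I) (n : ℕ) : qf i j (n+2) = qf i j n := by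
  unfold qf
  have : (n + 2) % 2 = n % 2 := by omega
  rw [this]

lemma qf_ne {i j : I} (hij : i ≠ j) (n : ℕ) : qf i j (n+1) ≠ qf i j n := by
  unfold qf
  rcases Nat.mod_two_eq_zero_or_one n with h | h
  · have h2 : (n+1) % 2 = 1 := by omega
    rw [h, h2]
    simpa using hij.symm
  · have h2 : (n+1) % 2 = 0 := by omega
    rw [h, h2]
    simpa using hij

lemma qf_mem (i j : I) (n : ℕ) : qf i j n = i ∨ qf i j n = j := by
  unfold qf; split_ifs <;> simp

lemma pvec_apply_i {i j : I} (hij : i ≠ j) (p : ℤ × ℤ) : pvec i j p i = p.1 := by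
  unfold pvec
  rw [plane_apply]
  simp [hij]

lemma pvec_apply_j {i j : I} (hij : i ≠ j) (p : ℤ × ℤ) : pvec i j p j = p.2 := by
  unfold pvec
  rw [plane_apply]
  simp [Ne.symm hij]

lemma pvec_inj {i j : I} (hij : i ≠ j) {p p' : ℤ × ℤ}
    (h : pvec i j p = pvec i j p') : p = p' := by
  have h1 := congrFun h i
  have h2 := congrFun h j
  rw [pvec_apply_i hij, pvec_apply_i hij] at h1
  rw [pvec_apply_j hij, pvec_apply_j hij] at h2
  exact Prod.ext h1 h2

lemma pvec_posV_iff {i j : I} (hij : i ≠ j) (p : ℤ × ℤ) :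
    PosV (pvec i j p) ↔ 0 ≤ p.1 ∧ 0 ≤ p.2 := by
  constructor
  · intro h
    constructor
    · have := h i; rwa [pvec_apply_i hij] at this
    · have := h j; rwa [pvec_apply_j hij] at this
  · rintro ⟨h1, h2⟩
    exact posV_plane h1 h2 i j

lemma pvec_add (i j : I) (p q : ℤ × ℤ) :
    pvec i j (p + q) = pvec i j p + pvec i j q := by
  unfold pvec
  simp only [Prod.fst_add, Prod.snd_add, add_smul]
  abel

lemma pvec_smul_sub (i j : I) (c : ℤ) (p q : ℤ × ℤ) :
    pvec i j (c • p - q) = c • pvec i j p - pvec i j q := by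
  unfold pvec
  simp only [Prod.smul_fst, Prod.smul_snd, Prod.fst_sub, Prod.snd_sub, sub_smul, mul_smul,
    smul_eq_mul]
  module

lemma pvec_line {i j : I} (hij : i ≠ j) (y : ℤ) (k : I) (hk : k ≠ j) :
    pvec i j (0, y) k = 0 := by
  unfold pvec
  rw [plane_apply]
  simp [hk]

include hAdiag hsimple hrefl in
lemma etaR_mem (z : X) (i j : I) (n : ℕ) : etaR A r z i j n ∈ Δ z :=
  wmap_mem A hAdiag r Δ hrefl _ (single_mem_root Δ hsimple _ _)

lemma wmap_sub (L : List I) (x : X) (u v : I → ℤ) :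
    wmap A r L x (u - v) = wmap A r L x u - wmap A r L x v := by
  have h : u - v = u + (-v) := by abel
  rw [h, wmap_add, wmap_neg]
  abel

include hAdiag in
lemma wmap_alt_last (z : X) (i j : I) (n : ℕ) :
    wmap A r (altL i j (n+1)) z (Pi.single (qf i j n) 1) = - etaR A r z i j n := by
  rw [altL_succ, wmap_cons, cartanRefl_single_self A hAdiag, wmap_neg]
  rfl

include hAdiag in
lemma etaR_rec {i j : I} (hij : i ≠ j) (z : X) (n : ℕ) :
    etaR A r z i j (n+2) = (- A (srcObj r (altL i j (n+1)) z) (qf i j (n+1)) (qf i j (n+2)))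
      • etaR A r z i j (n+1) - etaR A r z i j n := by
  have hne : qf i j (n+2) ≠ qf i j (n+1) := by
    rw [qf_add_two]
    exact (qf_ne hij n).symm
  show wmap A r (altL i j (n+2)) z (Pi.single (qf i j (n+2)) 1) = _
  rw [show altL i j (n+2) = qf i j (n+1) :: altL i j (n+1) from rfl, wmap_cons,
    cartanRefl_single_ne A _ _ hne, wmap_sub, wmap_smul]
  have h1 : wmap A r (altL i j (n+1)) z (Pi.single (qf i j (n+2)) 1) = - etaR A r z i j n := by
    rw [qf_add_two]
    exact wmap_alt_last A hAdiag r z i j n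
  have h2 : wmap A r (altL i j (n+1)) z (Pi.single (qf i j (n+1)) 1) = etaR A r z i j (n+1) :=
    rfl
  rw [h1, h2]
  module

lemma paSeq_rec (z : X) (i j : I) (n : ℕ) :
    paSeq A r z i j (n+2) = (- A (srcObj r (altL i j (n+1)) z) (qf i j (n+1)) (qf i j (n+2)))
      • paSeq A r z i j (n+1) - paSeq A r z i j n := rfl

include hAdiag in
lemma etaR_pa {i j : I} (hij : i ≠ j) (z : X) :
    ∀ n, etaR A r z i j n = pvec i j (paSeq A r z i j n) := by
  have key : ∀ n, etaR A r z i j n = pvec i j (paSeq A r z i j n) ∧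
      etaR A r z i j (n+1) = pvec i j (paSeq A r z i j (n+1)) := by
    intro n
    induction n with
    | zero =>
      constructor
      · show wmap A r [] z (Pi.single (qf i j 0) 1) = _
        rw [wmap_nil, qf_zero]
        show _ = pvec i j (1, 0)
        unfold pvec
        module
      · show wmap A r (altL i j 1) z (Pi.single (qf i j 1) 1) = _
        rw [show altL i j 1 = [qf i j 0] from rfl, wmap_cons, wmap_nil, qf_zero, qf_one]
        rw [show srcObj r [] z = z from rfl]
        rw [cartanRefl_single_ne A i z hij.symm]
        show _ = pvec i j (- A z i j, 1)
        unfold pvec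
        module
    | succ m ihm =>
      refine ⟨ihm.2, ?_⟩
      rw [show m + 1 + 1 = m + 2 from rfl, etaR_rec A hAdiag r hij z m, paSeq_rec,
        pvec_smul_sub, ← ihm.1, ← ihm.2]
  exact fun n => (key n).1

lemma paSeq_det (z : X) (i j : I) : ∀ n, det2 (paSeq A r z i j n) (paSeq A r z i j (n+1)) = 1 := by
  intro n
  induction n with
  | zero =>
    show det2 (1, 0) (- A z i j, 1) = 1
    unfold det2
    simp
  | succ m ihm =>
    rw [show m + 1 + 1 = m + 2 from rfl, paSeq_rec, det2_smul_sub, det2_swap]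
    omega

lemma paSeq_rec' (z : X) (i j : I) (n : ℕ) (hn : 1 ≤ n) :
    ∃ c : ℤ, paSeq A r z i j (n+1) + paSeq A r z i j (n-1) = c • paSeq A r z i j n := by
  obtain ⟨m, rfl⟩ : ∃ m, n = m + 1 := ⟨n - 1, by omega⟩
  refine ⟨- A (srcObj r (altL i j (m+1)) z) (qf i j (m+1)) (qf i j (m+2)), ?_⟩
  have h := paSeq_rec A r z i j m
  rw [show m + 1 + 1 = m + 2 from rfl, h]
  simp

include hAdiag in
lemma refl_pvec {i j : I} (hij : i ≠ j) (w : X) (k : I) (hk : k = i ∨ k = j) (p : ℤ × ℤ) :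
    ∃ p' : ℤ × ℤ, cartanRefl A k w (pvec i j p) = pvec i j p' := by
  rcases hk with rfl | rfl
  · refine ⟨(- p.1 - p.2 * A w k j, p.2), ?_⟩
    unfold pvec
    exact refl_plane A hAdiag hij.symm p.1 p.2
  · refine ⟨(p.1, - p.2 - p.1 * A w k i), ?_⟩
    have hcomm : pvec i k p = p.2 • Pi.single k 1 + p.1 • Pi.single i 1 := by
      unfold pvec; abel
    rw [hcomm, refl_plane A hAdiag hij]
    unfold pvec
    abel

include hAdiag in
lemma gmap_alt_pvec {i j : I} (hij : i ≠ j) (z : X) (n : ℕ) (p : ℤ × ℤ) :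
    ∃ p' : ℤ × ℤ, gmap A r (altL i j n) z (pvec i j p) = pvec i j p' := by
  induction n with
  | zero => exact ⟨p, rfl⟩
  | succ m ihm =>
    obtain ⟨p', hp'⟩ := ihm
    rw [altL_succ, gmap_cons, hp']
    exact refl_pvec A hAdiag hij _ _ (qf_mem i j m) p'

/-! ### The rank-two decomposition (proved below) and the main argument -/

include hAdiag hAoff hfin hposneg hsimple hrefl in
lemma plane_decomp {z : X} {i j : I} (hij : i ≠ j) {a b : ℤ}
    (ha : 1 ≤ a) (hb : 1 ≤ b)
    (hmem : a • Pi.single i 1 + b • Pi.single j 1 ∈ Δ z) :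
    ∃ a₁ b₁ a₂ b₂ : ℤ, 0 ≤ a₁ ∧ 0 ≤ b₁ ∧ 0 ≤ a₂ ∧ 0 ≤ b₂ ∧
      (a₁ • Pi.single i 1 + b₁ • Pi.single j 1) ∈ Δ z ∧
      (a₂ • Pi.single i 1 + b₂ • Pi.single j 1) ∈ Δ z ∧
      a = a₁ + a₂ ∧ b = b₁ + b₂ := by
  classical
  have hdet : ∀ n, det2 (paSeq A r z i j n) (paSeq A r z i j (n+1)) = 1 := paSeq_det A r z i j
  have hpa0 : ∀ n, paSeq A r z i j n ≠ 0 := fun n => det2_ne_zero_left (hdet n)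
  have hdetlt : ∀ n, (∀ t ≤ n, 0 ≤ (paSeq A r z i j t).1 ∧ 0 ≤ (paSeq A r z i j t).2) →
      ∀ m < n, 0 < det2 (paSeq A r z i j m) (paSeq A r z i j n) := by
    intro n
    induction n with
    | zero => intro _ m hm; omega
    | succ nn ihn =>
      intro hposn m hm
      rcases eq_or_lt_of_le (Nat.lt_succ_iff.mp hm) with h | h
      · rw [h]
        rw [hdet nn] at *
        have := hdet m
        omega
      · refine det2_trans (hposn m (by omega)) (hposn nn (by omega)) (hposn (nn+1) le_rfl)
          (hpa0 m) ?_ ?_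
        · exact ihn (fun t ht => hposn t (by omega)) m h
        · have := hdet nn; omega
  have hstop : ∃ N, ¬ (∀ t ≤ N, 0 ≤ (paSeq A r z i j t).1 ∧ 0 ≤ (paSeq A r z i j t).2) := by
    by_contra hall
    push_neg at hall
    have hposall : ∀ t, 0 ≤ (paSeq A r z i j t).1 ∧ 0 ≤ (paSeq A r z i j t).2 :=
      fun t => hall t t le_rfl
    have hinj : Function.Injective (fun n => etaR A r z i j n) := by
      have key : ∀ aa bb : ℕ, aa < bb → etaR A r z i j aa ≠ etaR A r z i j bb := by
        intro aa bb hab he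
        rw [etaR_pa A hAdiag r hij z, etaR_pa A hAdiag r hij z] at he
        have := pvec_inj hij he
        have hlt := hdetlt bb (fun t _ => hposall t) aa hab
        rw [← this, det2_self] at hlt
        omega
      intro aa bb hab
      by_contra hne
      rcases lt_trichotomy aa bb with h | h | h
      · exact key aa bb h hab
      · exact hne h
      · exact key bb aa h hab.symm
    exact (Set.infinite_of_injective_forall_mem hinj
      (fun n => etaR_mem A hAdiag r Δ hsimple hrefl z i j n)) (hfin z)
  set N₀ := Nat.find hstop with hN₀def
  have hN₀spec := Nat.find_spec hstop
  have hmin : ∀ m < N₀, (∀ t ≤ m, 0 ≤ (paSeq A r z i j t).1 ∧ 0 ≤ (paSeq A r z i j t).2) :=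
    fun m hm => not_not.mp (Nat.find_min hstop hm)
  have hP1 : ∀ t ≤ 1, 0 ≤ (paSeq A r z i j t).1 ∧ 0 ≤ (paSeq A r z i j t).2 := by
    intro t ht
    interval_cases t
    · show 0 ≤ ((1,0) : ℤ × ℤ).1 ∧ 0 ≤ ((1,0) : ℤ × ℤ).2
      simp
    · show 0 ≤ ((- A z i j, 1) : ℤ × ℤ).1 ∧ 0 ≤ ((- A z i j, 1) : ℤ × ℤ).2
      have := hAoff z i j hij
      constructor
      · simp; omega
      · simp
  have hN₀2 : 2 ≤ N₀ := by
    by_contra hlt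
    push_neg at hlt
    exact hN₀spec fun t ht => hP1 t (by omega)
  set M := N₀ - 1 with hMdef
  have hMpos : ∀ t ≤ M, 0 ≤ (paSeq A r z i j t).1 ∧ 0 ≤ (paSeq A r z i j t).2 :=
    hmin M (by omega)
  have hM1fail : ¬ (0 ≤ (paSeq A r z i j (M+1)).1 ∧ 0 ≤ (paSeq A r z i j (M+1)).2) := by
    intro hc
    apply hN₀spec
    intro t ht
    rcases eq_or_lt_of_le ht with h | h
    · have : t = M + 1 := by omega
      rw [this]; exact hc
    · exact hMpos t (by omega)
  have hposMeta : ∀ t ≤ M, PosV (etaR A r z i j t) := by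
    intro t ht
    rw [etaR_pa A hAdiag r hij z]
    exact (pvec_posV_iff hij _).mpr (hMpos t ht)
  have hnegM1 : NegV (etaR A r z i j (M+1)) := by
    rcases root_dichotomy _ hposneg (etaR_mem A hAdiag r Δ hsimple hrefl z i j (M+1)) with h | h
    · exfalso
      rw [etaR_pa A hAdiag r hij z] at h
      exact hM1fail ((pvec_posV_iff hij _).mp h)
    · exact h
  -- appearance of positive plane roots in the sweep
  have happ : ∀ p : ℤ × ℤ, 0 ≤ p.1 → 0 ≤ p.2 → p ≠ 0 → pvec i j p ∈ Δ z →
      ∃ m ≤ M, pvec i j p = etaR A r z i j m := by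
    intro p hp1 hp2 hp0 hmem'
    have hupos : PosV (pvec i j p) := (pvec_posV_iff hij p).mpr ⟨hp1, hp2⟩
    have hu0 : pvec i j p ≠ 0 := by
      intro h
      apply hp0
      have h0 : pvec i j p = pvec i j (0, 0) := by
        rw [h]; unfold pvec; simp
      exact pvec_inj hij h0
    have hexh : ¬ PosV (gmap A r (altL i j (M+1)) z (pvec i j p)) := by
      intro hPg
      obtain ⟨pg, hpg⟩ := gmap_alt_pvec A hAdiag r hij z (M+1) p
      have hpgpos := (pvec_posV_iff hij pg).mp (hpg ▸ hPg)
      have hu : pvec i j p = pg.1 • wmap A r (altL i j (M+1)) z (Pi.single i 1)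
          + pg.2 • wmap A r (altL i j (M+1)) z (Pi.single j 1) := by
        conv_lhs => rw [← wmap_gmap A hAdiag r (altL i j (M+1)) z (pvec i j p), hpg]
        show wmap A r (altL i j (M+1)) z
          (pg.1 • Pi.single i 1 + pg.2 • Pi.single j 1) = _
        rw [wmap_add, wmap_smul, wmap_smul]
      have hne2 := qf_ne hij M
      have hnegw : ∀ k, k = i ∨ k = j →
          NegV (wmap A r (altL i j (M+1)) z (Pi.single k 1)) := by
        intro k hk
        have hq : k = qf i j (M+1) ∨ k = qf i j M := by
          rcases hk with hk1 | hk1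
          · rcases qf_mem i j M with h1 | h1
            · right; exact hk1.trans h1.symm
            · rcases qf_mem i j (M+1) with h2 | h2
              · left; exact hk1.trans h2.symm
              · exact absurd (h2.trans h1.symm) hne2
          · rcases qf_mem i j M with h1 | h1
            · rcases qf_mem i j (M+1) with h2 | h2
              · exact absurd (h2.trans h1.symm) hne2
              · left; exact hk1.trans h2.symm
            · right; exact hk1.trans h1.symm
        rcases hq with hq | hq
        · rw [hq]; exact hnegM1
        · rw [hq, wmap_alt_last A hAdiag r z i j M]
          intro t
          have := hposMeta M le_rfl t
          simp only [Pi.neg_apply]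
          omega
      have hneg : NegV (pvec i j p) := by
        intro t
        rw [hu]
        simp only [Pi.add_apply, Pi.smul_apply, smul_eq_mul]
        have n1 := hnegw i (Or.inl rfl) t
        have n2 := hnegw j (Or.inr rfl) t
        nlinarith [hpgpos.1, hpgpos.2]
      exact hu0 (posV_negV_zero hupos hneg)
    have hT : ∃ n, ¬ PosV (gmap A r (altL i j n) z (pvec i j p)) := ⟨M+1, hexh⟩
    have hm'1 : 1 ≤ Nat.find hT := by
      rcases Nat.eq_zero_or_pos (Nat.find hT) with h | h
      · exfalso
        have := Nat.find_spec hT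
        rw [h] at this
        exact this hupos
      · exact h
    have hm'le : Nat.find hT ≤ M + 1 := Nat.find_le hexh
    set m := Nat.find hT - 1 with hmdef
    have hmM : m ≤ M := by omega
    have hprev : PosV (gmap A r (altL i j m) z (pvec i j p)) :=
      not_not.mp (Nat.find_min hT (by omega))
    have hcur : ¬ PosV (gmap A r (altL i j (m+1)) z (pvec i j p)) := by
      have hm : m + 1 = Nat.find hT := by omega
      rw [hm]
      exact Nat.find_spec hT
    have hgm : gmap A r (altL i j m) z (pvec i j p) ∈ Δ (srcObj r (altL i j m) z) :=
      gmap_mem A r Δ hrefl _ hmem'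
    have hflip : gmap A r (altL i j m) z (pvec i j p) = Pi.single (qf i j m) 1 := by
      by_contra hne
      apply hcur
      rw [altL_succ, gmap_cons]
      exact refl_flip A hAdiag r Δ hposneg hsimple hrefl _ hgm hprev hne
    refine ⟨m, hmM, ?_⟩
    calc pvec i j p = wmap A r (altL i j m) z (gmap A r (altL i j m) z (pvec i j p)) :=
          (wmap_gmap A hAdiag r (altL i j m) z (pvec i j p)).symm
      _ = wmap A r (altL i j m) z (Pi.single (qf i j m) 1) := by rw [hflip]
      _ = etaR A r z i j m := rfl
  -- the last sweep root is the simple root e_j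
  have hpv01 : pvec i j ((0 : ℤ), (1 : ℤ)) = Pi.single j 1 := by
    unfold pvec; module
  have hpaM : paSeq A r z i j M = (0, 1) := by
    obtain ⟨mj, hmjM, hmj⟩ := happ (0, 1) (by simp) (by simp)
      (by simp) (by rw [hpv01]; exact single_mem_root Δ hsimple z j)
    have hpamj : paSeq A r z i j mj = (0, 1) := by
      rw [etaR_pa A hAdiag r hij z] at hmj
      exact (pvec_inj hij hmj.symm)
    have hmjM' : mj = M := by
      by_contra hne
      have hmjlt : mj < M := by omega
      have hmj0 : mj ≠ 0 := by
        intro h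
        rw [h] at hpamj
        have : ((1:ℤ), (0:ℤ)) = ((0:ℤ), (1:ℤ)) := hpamj
        simp [Prod.ext_iff] at this
      obtain ⟨c, hc⟩ := paSeq_rec' A r z i j mj (by omega)
      have e1 : (paSeq A r z i j (mj+1)).1 + (paSeq A r z i j (mj-1)).1
          = c * (paSeq A r z i j mj).1 := by
        have := congrArg Prod.fst hc; simpa using this
      rw [hpamj] at e1
      simp at e1
      have p1 := (hMpos (mj+1) (by omega)).1
      have p2 := (hMpos (mj-1) (by omega)).1
      have hz1 : (paSeq A r z i j (mj-1)).1 = 0 := by omega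
      have hetap : etaR A r z i j (mj-1) = pvec i j (0, (paSeq A r z i j (mj-1)).2) := by
        rw [etaR_pa A hAdiag r hij z]
        have hpe2 : paSeq A r z i j (mj-1) = (0, (paSeq A r z i j (mj-1)).2) :=
          Prod.ext_iff.mpr ⟨hz1, rfl⟩
        conv_lhs => rw [hpe2]
      have hlinemem : etaR A r z i j (mj-1) ∈ Δ z :=
        etaR_mem A hAdiag r Δ hsimple hrefl z i j (mj-1)
      have hline : ∀ t, t ≠ j → etaR A r z i j (mj-1) t = 0 := by
        intro t htj
        rw [hetap]
        exact pvec_line hij _ t htj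
      rcases root_on_line Δ hsimple hlinemem hline with h | h
      · -- η (mj - 1) = e_j = η mj, contradiction with unimodularity
        have hpe : paSeq A r z i j (mj-1) = (0, 1) := by
          rw [etaR_pa A hAdiag r hij z] at h
          refine pvec_inj hij ?_
          rw [h, hpv01]
        have hd := hdet (mj-1)
        have hm1 : mj - 1 + 1 = mj := by omega
        rw [hm1, hpe, hpamj] at hd
        unfold det2 at hd
        simp at hd
      · exfalso
        have := hposMeta (mj-1) (by omega) j
        rw [h] at this
        simp at this
    rw [← hmjM']
    exact hpamj
  -- appearance of γ
  have hpvab : a • Pi.single i 1 + b • Pi.single j 1 = pvec i j (a, b) := rfl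
  obtain ⟨k, hkM, hk⟩ := happ (a, b) (by simp; omega) (by simp; omega)
    (by simp [Prod.ext_iff]; omega) (by rw [← hpvab]; exact hmem)
  have hpak : paSeq A r z i j k = (a, b) := by
    rw [etaR_pa A hAdiag r hij z] at hk
    exact pvec_inj hij hk.symm
  have hk0 : 0 < k := by
    rcases Nat.eq_zero_or_pos k with h | h
    · exfalso
      rw [h] at hpak
      have : ((1:ℤ), (0:ℤ)) = (a, b) := hpak
      rw [Prod.ext_iff] at this
      simp at this
      omega
    · exact h
  have hkMlt : k < M := by
    rcases eq_or_lt_of_le hkM with h | h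
    · exfalso
      rw [h, hpaM] at hpak
      have : ((0:ℤ), (1:ℤ)) = (a, b) := hpak
      rw [Prod.ext_iff] at this
      simp at this
      omega
    · exact h
  -- apply the abstract frieze lemma
  obtain ⟨s, t, hsle, htle, hsum⟩ := frieze_decomp M (paSeq A r z i j) rfl hpaM hMpos
    (fun n _ => hdet n) (fun n h1 h2 => paSeq_rec' A r z i j n h1) k hk0 hkMlt
  refine ⟨(paSeq A r z i j s).1, (paSeq A r z i j s).2,
    (paSeq A r z i j t).1, (paSeq A r z i j t).2,
    (hMpos s hsle).1, (hMpos s hsle).2, (hMpos t htle).1, (hMpos t htle).2, ?_, ?_, ?_, ?_⟩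
  · show pvec i j (paSeq A r z i j s) ∈ Δ z
    rw [← etaR_pa A hAdiag r hij z]
    exact etaR_mem A hAdiag r Δ hsimple hrefl z i j s
  · show pvec i j (paSeq A r z i j t) ∈ Δ z
    rw [← etaR_pa A hAdiag r hij z]
    exact etaR_mem A hAdiag r Δ hsimple hrefl z i j t
  · rw [hpak] at hsum
    have := congrArg Prod.fst hsum
    simpa using this
  · rw [hpak] at hsum
    have := congrArg Prod.snd hsum
    simpa using this
include hAdiag hAoff hfin hposneg hsimple hrefl in
lemma main_decomp {x : X} {α : I → ℤ} (hα : α ∈ Δ x) (hpos : PosV α)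
    (hns : ∀ t, α ≠ Pi.single t 1) :
    ∃ β γ : I → ℤ, β ∈ Δ x ∧ PosV β ∧ γ ∈ Δ x ∧ PosV γ ∧ α = β + γ := by
  obtain ⟨L₀, l₀, hw₀⟩ := exists_word_simple A hAdiag r Δ hfin hposneg hsimple hrefl hα hpos
  obtain ⟨L₁, i₁, j₁, a₁, b₁, htrip, hlt₁⟩ :=
    exists_triple A hAdiag r Δ hAoff hfin hposneg hsimple hrefl hpos hns
      ((NegS A r Δ L₀ x).ncard) L₀ l₀ hw₀ le_rfl
  clear hw₀ hlt₁
  suffices H : ∀ n : ℕ, ∀ (L : List I) (i j : I) (a b : ℤ),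
      IsTriple A r Δ x α L i j a b → (NegS A r Δ L x).ncard ≤ n →
      ∃ β γ : I → ℤ, β ∈ Δ x ∧ PosV β ∧ γ ∈ Δ x ∧ PosV γ ∧ α = β + γ by
    exact H _ L₁ i₁ j₁ a₁ b₁ htrip le_rfl
  intro n
  induction n using Nat.strong_induction_on with
  | _ n ih =>
    intro L i j a b htrip hcard
    by_cases hwi : PosV (wmap A r L x (Pi.single i 1))
    · by_cases hwj : PosV (wmap A r L x (Pi.single j 1))
      · obtain ⟨hij, ha, hb, hmem, hw⟩ := htrip
        obtain ⟨c₁, d₁, c₂, d₂, h1, h2, h3, h4, hm1, hm2, hsa, hsb⟩ :=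
          plane_decomp A hAdiag r Δ hAoff hfin hposneg hsimple hrefl hij ha hb hmem
        refine ⟨wmap A r L x (c₁ • Pi.single i 1 + d₁ • Pi.single j 1),
          wmap A r L x (c₂ • Pi.single i 1 + d₂ • Pi.single j 1),
          wmap_mem A hAdiag r Δ hrefl L hm1, ?_,
          wmap_mem A hAdiag r Δ hrefl L hm2, ?_, ?_⟩
        · rw [wmap_add, wmap_smul, wmap_smul]
          exact posV_add (posV_smul hwi h1) (posV_smul hwj h2)
        · rw [wmap_add, wmap_smul, wmap_smul]
          exact posV_add (posV_smul hwi h3) (posV_smul hwj h4)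
        · have hargs : (a • Pi.single i 1 + b • Pi.single j 1 : I → ℤ)
              = (c₁ • Pi.single i 1 + d₁ • Pi.single j 1)
                + (c₂ • Pi.single i 1 + d₂ • Pi.single j 1) := by
            rw [hsa, hsb]; module
          rw [← hw, hargs, wmap_add]
      · obtain ⟨L', i', j', a', b', htrip', hlt⟩ :=
          triple_step A hAdiag r Δ hAoff hfin hposneg hsimple hrefl hpos hns
            (IsTriple_swap A r Δ htrip) hwj
        exact ih ((NegS A r Δ L' x).ncard) (by omega) L' i' j' a' b' htrip' le_rfl
    · obtain ⟨L', i', j', a', b', htrip', hlt⟩ :=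
        triple_step A hAdiag r Δ hAoff hfin hposneg hsimple hrefl hpos hns htrip hwi
      exact ih ((NegS A r Δ L' x).ncard) (by omega) L' i' j' a' b' htrip' le_rfl

end CH


/-- **Decomposition of positive roots.**  In a Cartan scheme with a finite root system,
every positive root which is not simple is the sum of two positive roots. -/
theorem positive_root_decomposition {I X : Type*} [Fintype I] [DecidableEq I]
    [Nonempty I] [Nonempty X]
    -- Cartan scheme data
    (r : I → X → X) (A : X → I → I → ℤ)
    (hr : ∀ i x, r i (r i x) = x)
    (hAdiag : ∀ x i, A x i i = 2)
    (hAoff : ∀ x i j, i ≠ j → A x i j ≤ 0)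
    (hAzero : ∀ x i j, A x i j = 0 ↔ A x j i = 0)
    (hAr : ∀ x i j, A x i j = A (r i x) i j)
    -- root system data
    (Δ : X → Set (I → ℤ))
    (hfin : ∀ x, (Δ x).Finite)
    (hposneg : ∀ x, Δ x = (Δ x ∩ {v | ∀ i, 0 ≤ v i}) ∪ (-(Δ x ∩ {v | ∀ i, 0 ≤ v i})))
    (hsimple : ∀ x i, Δ x ∩ {v | ∃ z : ℤ, v = z • Pi.single i 1} =
        {Pi.single i 1, -Pi.single i 1})
    (hrefl : ∀ x i, cartanRefl A i x '' Δ x = Δ (r i x))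
    (hcard : ∀ x i j, i ≠ j →
        (r i ∘ r j)^[(Δ x ∩ {v | ∃ a b : ℕ,
          v = (a : ℤ) • Pi.single i 1 + (b : ℤ) • Pi.single j 1}).ncard] x = x) :
    -- conclusion
    ∀ x : X, ∀ α ∈ Δ x, (∀ i, 0 ≤ α i) → (∀ i, α ≠ Pi.single i 1) →
      ∃ β γ : I → ℤ, β ∈ Δ x ∧ (∀ i, 0 ≤ β i) ∧ γ ∈ Δ x ∧ (∀ i, 0 ≤ γ i) ∧ α = β + γ := by
  intro x α hα h1 h2
  exact main_decomp A hAdiag r Δ hAoff hfin hposneg hsimple hrefl hα h1 h2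
end

section
/- Given a Cartan scheme with a finite root system (Δ^X)_{X∈𝔛}, for every X ∈ 𝔛, every pair of distinct indices i ≠ j in I, and every k ∈ ℕ₀: the element k·α_i + α_j belongs to Δ^X if and only if 0 ≤ k ≤ −a^X_{ij}. Consequently, a^X_{ij} = −max{ k ∈ ℕ₀ : k·α_i + α_j ∈ Δ^X }. -/
namespace CartanAux

/-- 2×2 determinant of a pair of integer vectors. -/
def det2 (v w : ℤ × ℤ) : ℤ := v.1 * w.2 - v.2 * w.1

lemma det2_anti (v w : ℤ × ℤ) : det2 v w = - det2 w v := by simp [det2]; ring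

/-- Abstract rank-two root-system data extracted from a Cartan scheme. -/
structure R2Sys (X : Type*) where
  r1 : X → X
  r2 : X → X
  cc : X → ℤ
  dd : X → ℤ
  Q : X → Set (ℤ × ℤ)
  fin : ∀ y, (Q y).Finite
  hc : ∀ y, 0 ≤ cc y
  hd : ∀ y, 0 ≤ dd y
  hcr : ∀ y, cc (r1 y) = cc y
  hdr : ∀ y, dd (r2 y) = dd y
  hr1 : ∀ y, r1 (r1 y) = y
  hr2 : ∀ y, r2 (r2 y) = y
  mem1 : ∀ y v, v ∈ Q y → (cc y * v.2 - v.1, v.2) ∈ Q (r1 y)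
  mem2 : ∀ y v, v ∈ Q y → (v.1, dd y * v.1 - v.2) ∈ Q (r2 y)
  posneg : ∀ y v, v ∈ Q y → (0 ≤ v.1 ∧ 0 ≤ v.2) ∨ (v.1 ≤ 0 ∧ v.2 ≤ 0)
  axis1 : ∀ y (a : ℤ), (a, (0:ℤ)) ∈ Q y → a = 1 ∨ a = -1
  axis2 : ∀ y (b : ℤ), ((0:ℤ), b) ∈ Q y → b = 1 ∨ b = -1
  one0 : ∀ y, ((1:ℤ), (0:ℤ)) ∈ Q y
  zero1 : ∀ y, ((0:ℤ), (1:ℤ)) ∈ Q y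

namespace R2Sys

variable {X : Type*} (S : R2Sys X)

def Qp (y : X) : Set (ℤ × ℤ) := {v | v ∈ S.Q y ∧ 0 ≤ v.1 ∧ 0 ≤ v.2}
def s1 (y : X) (v : ℤ × ℤ) : ℤ × ℤ := (S.cc y * v.2 - v.1, v.2)
def s2 (y : X) (v : ℤ × ℤ) : ℤ × ℤ := (v.1, S.dd y * v.1 - v.2)
def below (y : X) (v : ℤ × ℤ) : Set (ℤ × ℤ) := {w | w ∈ S.Qp y ∧ 0 < det2 w v}
def above (y : X) (v : ℤ × ℤ) : Set (ℤ × ℤ) := {w | w ∈ S.Qp y ∧ 0 < det2 v w}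
def ray (y : X) (v : ℤ × ℤ) : Set (ℤ × ℤ) := {w | w ∈ S.Qp y ∧ det2 v w = 0}
noncomputable def B (y : X) (v : ℤ × ℤ) : ℕ := (S.below y v).ncard

variable {S}
variable {y : X} {v w : ℤ × ℤ}

lemma finQp : (S.Qp y).Finite := (S.fin y).subset (fun v hv => hv.1)
lemma finBelow : (S.below y v).Finite := finQp.subset (fun w hw => hw.1)
lemma finAbove : (S.above y v).Finite := finQp.subset (fun w hw => hw.1)
lemma finRay : (S.ray y v).Finite := finQp.subset (fun w hw => hw.1)

lemma QpsubQ (h : v ∈ S.Qp y) : v ∈ S.Q y := h.1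

lemma eq_one0 (h : v ∈ S.Qp y) (h2 : v.2 = 0) : v = (1, 0) := by
  obtain ⟨hQ, h1, _⟩ := h
  have : (v.1, (0:ℤ)) ∈ S.Q y := by rw [← h2]; exact hQ
  rcases S.axis1 y v.1 this with ha | ha
  · ext <;> simp [ha, h2]
  · omega

lemma eq_zero1 (h : v ∈ S.Qp y) (h1 : v.1 = 0) : v = (0, 1) := by
  obtain ⟨hQ, _, h2⟩ := h
  have : ((0:ℤ), v.2) ∈ S.Q y := by rw [← h1]; exact hQ
  rcases S.axis2 y v.2 this with ha | ha
  · ext <;> simp [ha, h1]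
  · omega

lemma snd_pos (h : v ∈ S.Qp y) (hne : v ≠ (1, 0)) : 0 < v.2 := by
  rcases lt_or_eq_of_le h.2.2 with h' | h'
  · exact h'
  · exact absurd (eq_one0 h h'.symm) hne

lemma fst_pos (h : v ∈ S.Qp y) (hne : v ≠ (0, 1)) : 0 < v.1 := by
  rcases lt_or_eq_of_le h.2.1 with h' | h'
  · exact h'
  · exact absurd (eq_zero1 h h'.symm) hne

lemma one0_mem : ((1:ℤ), (0:ℤ)) ∈ S.Qp y := ⟨S.one0 y, by norm_num, by norm_num⟩
lemma zero1_mem : ((0:ℤ), (1:ℤ)) ∈ S.Qp y := ⟨S.zero1 y, by norm_num, by norm_num⟩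

lemma s1_s1 : S.s1 (S.r1 y) (S.s1 y v) = v := by
  simp [s1, S.hcr y]

lemma s2_s2 : S.s2 (S.r2 y) (S.s2 y v) = v := by
  simp [s2, S.hdr y]

lemma det2_s1 : det2 (S.s1 y v) (S.s1 y w) = - det2 v w := by simp [det2, s1]; ring
lemma det2_s2 : det2 (S.s2 y v) (S.s2 y w) = - det2 v w := by simp [det2, s2]; ring

lemma s1_snd : (S.s1 y v).2 = v.2 := rfl
lemma s2_fst : (S.s2 y v).1 = v.1 := rfl

lemma s1_memQ (h : v ∈ S.Q y) : S.s1 y v ∈ S.Q (S.r1 y) := S.mem1 y v h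
lemma s2_memQ (h : v ∈ S.Q y) : S.s2 y v ∈ S.Q (S.r2 y) := S.mem2 y v h

lemma memQ_of_s1 (h : S.s1 y v ∈ S.Q (S.r1 y)) : v ∈ S.Q y := by
  have := S.mem1 (S.r1 y) _ h
  rw [show (S.cc (S.r1 y) * (S.s1 y v).2 - (S.s1 y v).1, (S.s1 y v).2) = S.s1 (S.r1 y) (S.s1 y v) from rfl,
    s1_s1, S.hr1 y] at this
  exact this

lemma s1_memQp (h : v ∈ S.Qp y) (h2 : 0 < v.2) : S.s1 y v ∈ S.Qp (S.r1 y) := by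
  have hQ := s1_memQ h.1
  rcases S.posneg _ _ hQ with hp | hn
  · exact ⟨hQ, hp.1, hp.2⟩
  · exfalso; have := hn.2; rw [s1_snd] at this; omega

lemma s2_memQp (h : v ∈ S.Qp y) (h1 : 0 < v.1) : S.s2 y v ∈ S.Qp (S.r2 y) := by
  have hQ := s2_memQ h.1
  rcases S.posneg _ _ hQ with hp | hn
  · exact ⟨hQ, hp.1, hp.2⟩
  · exfalso; have := hn.1; rw [s2_fst] at this; omega

lemma s1_memQp' (h : v ∈ S.Qp (S.r1 y)) (h2 : 0 < v.2) : S.s1 (S.r1 y) v ∈ S.Qp y := by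
  have := s1_memQp (y := S.r1 y) h h2
  rwa [S.hr1 y] at this

lemma s2_memQp' (h : v ∈ S.Qp (S.r2 y)) (h1 : 0 < v.1) : S.s2 (S.r2 y) v ∈ S.Qp y := by
  have := s2_memQp (y := S.r2 y) h h1
  rwa [S.hr2 y] at this

lemma s1_s1' : S.s1 y (S.s1 (S.r1 y) v) = v := by
  have := s1_s1 (S := S) (y := S.r1 y) (v := v)
  rwa [S.hr1 y] at this

lemma s2_s2' : S.s2 y (S.s2 (S.r2 y) v) = v := by
  have := s2_s2 (S := S) (y := S.r2 y) (v := v)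
  rwa [S.hr2 y] at this

/-- `(c_y, 1)` is always a positive root. -/
lemma cc1_mem : (S.cc y, (1:ℤ)) ∈ S.Qp y := by
  have h0 : ((0:ℤ), (1:ℤ)) ∈ S.Q (S.r1 y) := S.zero1 _
  have := S.mem1 _ _ h0
  simp only [S.hcr y, S.hr1 y] at this
  refine ⟨by simpa using this, by simpa using S.hc y, by norm_num⟩

lemma dd1_mem : ((1:ℤ), S.dd y) ∈ S.Qp y := by
  have h0 : ((1:ℤ), (0:ℤ)) ∈ S.Q (S.r2 y) := S.one0 _
  have := S.mem2 _ _ h0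
  simp only [S.hdr y, S.hr2 y] at this
  refine ⟨by simpa using this, by norm_num, by simpa using S.hd y⟩

lemma below_one0 : S.below y (1, 0) = ∅ := by
  ext w
  simp only [below, Set.mem_setOf_eq, Set.mem_empty_iff_false, iff_false, not_and]
  intro hw
  have : det2 w (1, 0) = -w.2 := by simp [det2]
  rw [this]
  have := hw.2.2
  omega

lemma B_one0 : S.B y (1, 0) = 0 := by
  rw [B, below_one0, Set.ncard_empty]

lemma below_cc1 : S.below y (S.cc y, 1) = {(1, 0)} := by
  ext w
  simp only [below, Set.mem_setOf_eq, Set.mem_singleton_iff]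
  constructor
  · rintro ⟨hw, hdet⟩
    by_contra hne
    have h2 : 0 < w.2 := snd_pos hw hne
    have hs := s1_memQp hw h2
    have h3 : 0 ≤ (S.s1 y w).1 := hs.2.1
    simp only [s1] at h3
    have h4 : det2 w (S.cc y, 1) = w.1 - S.cc y * w.2 := by simp [det2]; ring
    rw [h4] at hdet
    omega
  · rintro rfl
    refine ⟨one0_mem, ?_⟩
    show (0:ℤ) < det2 (1,0) (S.cc y, 1)
    simp [det2]

lemma B_cc1 : S.B y (S.cc y, 1) = 1 := by
  rw [B, below_cc1, Set.ncard_singleton]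

lemma ray_cc1 (hw : w ∈ S.Qp y) (h : det2 (S.cc y, 1) w = 0) : w = (S.cc y, 1) := by
  have hne : w ≠ (1, 0) := by
    intro hw0; rw [hw0] at h; simp [det2] at h
  have h2 : 0 < w.2 := snd_pos hw hne
  have hs := s1_memQp hw h2
  have h' : S.cc y * w.2 - w.1 = 0 := by
    have hh : det2 (S.cc y, 1) w = S.cc y * w.2 - w.1 := by simp [det2]
    rw [← hh]; exact h
  have hfst : (S.s1 y w).1 = 0 := by simp only [s1]; omega
  have hss := eq_zero1 hs hfst
  simp only [s1, Prod.ext_iff] at hss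
  have hw2 : w.2 = 1 := hss.2
  have : S.cc y * w.2 = S.cc y := by rw [hw2, mul_one]
  ext
  · show w.1 = S.cc y; omega
  · exact hw2

lemma above_dd1 : S.above y (1, S.dd y) = {(0, 1)} := by
  ext w
  simp only [above, Set.mem_setOf_eq, Set.mem_singleton_iff]
  constructor
  · rintro ⟨hw, hdet⟩
    by_contra hne
    have h1 : 0 < w.1 := fst_pos hw hne
    have hs := s2_memQp hw h1
    have : 0 ≤ (S.s2 y w).2 := hs.2.2
    simp only [s2] at this
    simp only [det2] at hdet
    omega
  · rintro rfl
    exact ⟨zero1_mem, by simp [det2]⟩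

lemma ray_dd1 (hw : w ∈ S.Qp y) (h : det2 (1, S.dd y) w = 0) : w = (1, S.dd y) := by
  have hne : w ≠ (0, 1) := by
    intro hw0; rw [hw0] at h; simp [det2] at h
  have h1 : 0 < w.1 := fst_pos hw hne
  have hs := s2_memQp hw h1
  have h' : S.dd y * w.1 - w.2 = 0 := by
    have hh : det2 (1, S.dd y) w = -(S.dd y * w.1 - w.2) := by simp [det2]
    rw [hh] at h; omega
  have hsnd : (S.s2 y w).2 = 0 := by simp only [s2]; omega
  have hss := eq_one0 hs hsnd
  simp only [s2, Prod.ext_iff] at hss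
  have hw1 : w.1 = 1 := hss.1
  have : S.dd y * w.1 = S.dd y := by rw [hw1, mul_one]
  ext
  · exact hw1
  · show w.2 = S.dd y; omega

lemma toplemma (hv : v ∈ S.Qp y) (h : S.above y v = {(0, 1)}) : v = (1, S.dd y) := by
  have hd1 : ((1:ℤ), S.dd y) ∈ S.Qp y := dd1_mem
  rcases lt_trichotomy (det2 v (1, S.dd y)) 0 with hlt | heq | hgt
  · have hmem : v ∈ S.above y (1, S.dd y) := ⟨hv, by rw [det2_anti]; omega⟩
    rw [above_dd1] at hmem
    rw [hmem] at h
    exfalso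
    have h01 : ((0:ℤ),(1:ℤ)) ∈ S.above y ((0:ℤ),(1:ℤ)) := by rw [h]; rfl
    have := h01.2
    simp [det2] at this
  · exact ray_dd1 hv (by rw [det2_anti, heq, neg_zero])
  · exfalso
    have hmem : ((1:ℤ), S.dd y) ∈ S.above y v := ⟨hd1, hgt⟩
    rw [h] at hmem
    simp [Prod.ext_iff] at hmem


lemma s1_inj : Function.Injective (S.s1 y) := by
  intro a b h
  simp only [s1, Prod.ext_iff] at h
  obtain ⟨h1, h2⟩ := h
  rw [h2] at h1
  ext
  · omega
  · exact h2

lemma s2_inj : Function.Injective (S.s2 y) := by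
  intro a b h
  simp only [s2, Prod.ext_iff] at h
  obtain ⟨h1, h2⟩ := h
  rw [h1] at h2
  ext
  · exact h1
  · omega

lemma below_s1_eq (hv : v ∈ S.Qp y) (h2 : 0 < v.2) :
    S.below (S.r1 y) (S.s1 y v) = insert ((1:ℤ),(0:ℤ)) (S.s1 y '' (S.above y v)) := by
  ext w'
  simp only [below, Set.mem_setOf_eq, Set.mem_insert_iff, Set.mem_image]
  constructor
  · rintro ⟨hw', hdet⟩
    by_cases he : w' = (1,0)
    · left; exact he
    · right
      have hw2 : 0 < w'.2 := snd_pos hw' he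
      refine ⟨S.s1 (S.r1 y) w', ⟨s1_memQp' hw' hw2, ?_⟩, s1_s1'⟩
      have hd : det2 (S.s1 y (S.s1 (S.r1 y) w')) (S.s1 y v) = - det2 (S.s1 (S.r1 y) w') v :=
        det2_s1
      rw [s1_s1'] at hd
      have ha : det2 v (S.s1 (S.r1 y) w') = - det2 (S.s1 (S.r1 y) w') v := det2_anti _ _
      omega
  · rintro (rfl | ⟨w, ⟨hwQ, hdet⟩, rfl⟩)
    · refine ⟨one0_mem, ?_⟩
      have : det2 ((1:ℤ),(0:ℤ)) (S.s1 y v) = v.2 := by simp [det2, s1]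
      omega
    · have hwne : w ≠ (1,0) := by
        rintro rfl
        have : det2 v ((1:ℤ),(0:ℤ)) = -v.2 := by simp [det2]
        omega
      have hw2 : 0 < w.2 := snd_pos hwQ hwne
      refine ⟨s1_memQp hwQ hw2, ?_⟩
      have hd : det2 (S.s1 y w) (S.s1 y v) = - det2 w v := det2_s1
      have ha : det2 v w = - det2 w v := det2_anti _ _
      omega

lemma B_s1_eq (hv : v ∈ S.Qp y) (h2 : 0 < v.2) :
    S.B (S.r1 y) (S.s1 y v) = (S.above y v).ncard + 1 := by
  rw [B, below_s1_eq hv h2,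
    Set.ncard_insert_of_notMem ?hnm (finAbove.image _),
    Set.ncard_image_of_injective _ s1_inj]
  case hnm =>
    rintro ⟨w, ⟨hwQ, hdet⟩, heq⟩
    have hw2 : w.2 = 0 := by
      have : (S.s1 y w).2 = w.2 := rfl
      rw [heq] at this
      exact this.symm
    have := eq_one0 hwQ hw2
    rw [this] at hdet
    have : det2 v ((1:ℤ),(0:ℤ)) = -v.2 := by simp [det2]
    omega

lemma below_s2_eq (hv : v ∈ S.Qp y) (h1 : 0 < v.1) :
    S.below (S.r2 y) (S.s2 y v) = S.s2 y '' (S.above y v \ {((0:ℤ),(1:ℤ))}) := by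
  ext w'
  simp only [below, Set.mem_setOf_eq, Set.mem_image, Set.mem_diff, Set.mem_singleton_iff]
  constructor
  · rintro ⟨hw', hdet⟩
    have hne : w' ≠ (0,1) := by
      rintro rfl
      have : det2 ((0:ℤ),(1:ℤ)) (S.s2 y v) = -v.1 := by simp [det2, s2]
      omega
    have hw1 : 0 < w'.1 := fst_pos hw' hne
    refine ⟨S.s2 (S.r2 y) w', ⟨⟨s2_memQp' hw' hw1, ?_⟩, ?_⟩, s2_s2'⟩
    · have hd : det2 (S.s2 y (S.s2 (S.r2 y) w')) (S.s2 y v) = - det2 (S.s2 (S.r2 y) w') v :=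
        det2_s2
      rw [s2_s2'] at hd
      have ha : det2 v (S.s2 (S.r2 y) w') = - det2 (S.s2 (S.r2 y) w') v := det2_anti _ _
      omega
    · intro hcon
      have : w' = S.s2 y ((0:ℤ),(1:ℤ)) := by rw [← hcon, s2_s2']
      rw [this] at hw'
      have := hw'.2.2
      simp [s2] at this
  · rintro ⟨w, ⟨⟨hwQ, hdet⟩, hwne⟩, rfl⟩
    have hw1 : 0 < w.1 := fst_pos hwQ hwne
    refine ⟨s2_memQp hwQ hw1, ?_⟩
    have hd : det2 (S.s2 y w) (S.s2 y v) = - det2 w v := det2_s2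
    have ha : det2 v w = - det2 w v := det2_anti _ _
    omega

lemma above_ncard_s2 (hv : v ∈ S.Qp y) (h1 : 0 < v.1) :
    (S.above y v).ncard = S.B (S.r2 y) (S.s2 y v) + 1 := by
  rw [B, below_s2_eq hv h1, Set.ncard_image_of_injective _ s2_inj]
  have h01 : ((0:ℤ),(1:ℤ)) ∈ S.above y v := by
    refine ⟨zero1_mem, ?_⟩
    have : det2 v ((0:ℤ),(1:ℤ)) = v.1 := by simp [det2]
    omega
  exact (Set.ncard_diff_singleton_add_one h01 finAbove).symm

lemma partition (hv : v ∈ S.Qp y) :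
    (S.Qp y).ncard = S.B y v + (S.ray y v).ncard + (S.above y v).ncard := by
  have hsplit : S.Qp y = (S.below y v ∪ S.ray y v) ∪ S.above y v := by
    ext w
    constructor
    · intro hw
      rcases lt_trichotomy (det2 v w) 0 with h|h|h
      · exact Or.inl (Or.inl ⟨hw, by have := det2_anti v w; omega⟩)
      · exact Or.inl (Or.inr ⟨hw, h⟩)
      · exact Or.inr ⟨hw, h⟩
    · rintro ((h|h)|h) <;> exact h.1
  have d1 : Disjoint (S.below y v) (S.ray y v) := by
    rw [Set.disjoint_left]
    rintro w ⟨_, h1⟩ ⟨_, h2⟩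
    have := det2_anti v w
    omega
  have d2 : Disjoint (S.below y v ∪ S.ray y v) (S.above y v) := by
    rw [Set.disjoint_left]
    rintro w (⟨_, h1⟩|⟨_, h1⟩) ⟨_, h2⟩ <;>
      · have := det2_anti v w
        omega
  rw [hsplit, Set.ncard_union_eq d2 (finBelow.union finRay) finAbove,
    Set.ncard_union_eq d1 finBelow finRay]
  rfl

lemma Qp_split : S.Qp y = insert ((1:ℤ),(0:ℤ)) {w | w ∈ S.Qp y ∧ 0 < w.2} := by
  ext w
  simp only [Set.mem_insert_iff, Set.mem_setOf_eq]
  constructor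
  · intro hw
    by_cases he : w = (1,0)
    · exact Or.inl he
    · exact Or.inr ⟨hw, snd_pos hw he⟩
  · rintro (rfl | ⟨hw, _⟩)
    · exact one0_mem
    · exact hw

lemma pos_part_s1 :
    {w | w ∈ S.Qp (S.r1 y) ∧ 0 < w.2} = S.s1 y '' {w | w ∈ S.Qp y ∧ 0 < w.2} := by
  ext w'
  simp only [Set.mem_setOf_eq, Set.mem_image]
  constructor
  · rintro ⟨hw', h2⟩
    exact ⟨S.s1 (S.r1 y) w', ⟨s1_memQp' hw' h2, h2⟩, s1_s1'⟩
  · rintro ⟨w, ⟨hw, h2⟩, rfl⟩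
    exact ⟨s1_memQp hw h2, h2⟩

lemma N_s1 : (S.Qp (S.r1 y)).ncard = (S.Qp y).ncard := by
  have hnm : ∀ (z : X), ((1:ℤ),(0:ℤ)) ∉ {w : ℤ × ℤ | w ∈ S.Qp z ∧ 0 < w.2} := by
    rintro z ⟨_, h⟩
    simp at h
  have hfin : ∀ (z : X), {w : ℤ × ℤ | w ∈ S.Qp z ∧ 0 < w.2}.Finite :=
    fun z => (finQp (y := z)).subset (fun w hw => hw.1)
  rw [Qp_split (y := S.r1 y), Qp_split (y := y),
    Set.ncard_insert_of_notMem (hnm _) (hfin _),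
    Set.ncard_insert_of_notMem (hnm _) (hfin _),
    pos_part_s1, Set.ncard_image_of_injective _ s1_inj]

lemma ray_s1_eq (hv : v ∈ S.Qp y) (h2 : 0 < v.2) :
    S.ray (S.r1 y) (S.s1 y v) = S.s1 y '' S.ray y v := by
  ext w'
  simp only [ray, Set.mem_setOf_eq, Set.mem_image]
  constructor
  · rintro ⟨hw', hdet⟩
    have hne : w' ≠ (1,0) := by
      rintro rfl
      have : det2 (S.s1 y v) ((1:ℤ),(0:ℤ)) = -v.2 := by simp [det2, s1]
      omega
    have hw2 : 0 < w'.2 := snd_pos hw' hne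
    refine ⟨S.s1 (S.r1 y) w', ⟨s1_memQp' hw' hw2, ?_⟩, s1_s1'⟩
    have hd : det2 (S.s1 y v) (S.s1 y (S.s1 (S.r1 y) w')) = - det2 v (S.s1 (S.r1 y) w') :=
      det2_s1
    rw [s1_s1'] at hd
    omega
  · rintro ⟨w, ⟨hwQ, hdet⟩, rfl⟩
    have hwne : w ≠ (1,0) := by
      rintro rfl
      have : det2 v ((1:ℤ),(0:ℤ)) = -v.2 := by simp [det2]
      omega
    have hw2 : 0 < w.2 := snd_pos hwQ hwne
    refine ⟨s1_memQp hwQ hw2, ?_⟩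
    have hd : det2 (S.s1 y v) (S.s1 y w) = - det2 v w := det2_s1
    omega

lemma B_step (hv : v ∈ S.Qp y) (h2 : 0 < v.2) (hne : S.s1 y v ≠ (0,1)) :
    S.B (S.r2 (S.r1 y)) (S.s2 (S.r1 y) (S.s1 y v)) + 2 = S.B y v := by
  have hv1 : S.s1 y v ∈ S.Qp (S.r1 y) := s1_memQp hv h2
  have hv1fst : 0 < (S.s1 y v).1 := fst_pos hv1 hne
  have e1 : S.B (S.r1 y) (S.s1 y v) = (S.above y v).ncard + 1 := B_s1_eq hv h2
  have e2 : (S.above (S.r1 y) (S.s1 y v)).ncard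
      = S.B (S.r2 (S.r1 y)) (S.s2 (S.r1 y) (S.s1 y v)) + 1 := above_ncard_s2 hv1 hv1fst
  have e3 : (S.Qp (S.r1 y)).ncard = S.B (S.r1 y) (S.s1 y v)
      + (S.ray (S.r1 y) (S.s1 y v)).ncard + (S.above (S.r1 y) (S.s1 y v)).ncard :=
    partition hv1
  have e4 : (S.Qp y).ncard = S.B y v + (S.ray y v).ncard + (S.above y v).ncard :=
    partition hv
  have e5 : (S.Qp (S.r1 y)).ncard = (S.Qp y).ncard := N_s1
  have e6 : (S.ray (S.r1 y) (S.s1 y v)).ncard = (S.ray y v).ncard := by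
    rw [ray_s1_eq hv h2, Set.ncard_image_of_injective _ s1_inj]
  omega


lemma det2_comp (z z' : X) (a b : ℤ × ℤ) :
    det2 (S.s2 z' (S.s1 z a)) (S.s2 z' (S.s1 z b)) = det2 a b := by
  simp [det2, s1, s2]; ring

lemma s1_ne_zero1 (hne : S.s1 y v = (0, 1)) : v = (S.cc y, 1) := by
  have h1 : S.cc y * v.2 - v.1 = 0 := congrArg Prod.fst hne
  have h2 : v.2 = 1 := congrArg Prod.snd hne
  have h3 : S.cc y * v.2 = S.cc y := by rw [h2, mul_one]
  ext
  · show v.1 = S.cc y; omega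
  · exact h2

theorem main : ∀ (n : ℕ) (y : X) (v : ℤ × ℤ), v ∈ S.Qp y → S.B y v = n →
    ((∀ w ∈ S.Qp y, det2 v w = 0 → w = v) ∧
     (∀ w ∈ S.Qp y, 0 < det2 w v →
        (∀ u ∈ S.Qp y, ¬(0 < det2 w u ∧ 0 < det2 u v)) → det2 w v = 1)) := by
  intro n
  induction n using Nat.strong_induction_on with
  | _ n IH =>
  intro y v hv hB
  rcases n with _ | n
  · -- n = 0 : v = (1,0)
    have hv10 : v = (1, 0) := by
      by_contra h
      have h2 := snd_pos hv h
      have hmem : ((1:ℤ),(0:ℤ)) ∈ S.below y v := by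
        refine ⟨one0_mem, ?_⟩
        have : det2 ((1:ℤ),(0:ℤ)) v = v.2 := by simp [det2]
        omega
      have : 0 < S.B y v := (Set.ncard_pos finBelow).2 ⟨_, hmem⟩
      omega
    subst hv10
    constructor
    · intro w hw hdet
      have h3 : det2 ((1:ℤ),(0:ℤ)) w = w.2 := by simp [det2]
      exact eq_one0 hw (by omega)
    · intro w hw hdet _
      have h3 : det2 w ((1:ℤ),(0:ℤ)) = -w.2 := by simp [det2]
      have := hw.2.2
      omega
  rcases n with _ | m
  · -- n = 1 : v = (cc y, 1)
    have hv10 : v ≠ (1, 0) := by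
      rintro rfl; rw [B_one0] at hB; omega
    have hveq : v = (S.cc y, 1) := by
      rcases lt_trichotomy (det2 (S.cc y, 1) v) 0 with hlt | heq | hgt
      · have hmem : v ∈ S.below y (S.cc y, 1) := by
          refine ⟨hv, ?_⟩
          have := det2_anti (S.cc y, 1) v
          omega
        rw [below_cc1, Set.mem_singleton_iff] at hmem
        exact absurd hmem hv10
      · exact ray_cc1 hv heq
      · exfalso
        have h1 : ((1:ℤ),(0:ℤ)) ∈ S.below y v := by
          refine ⟨one0_mem, ?_⟩
          have h3 : det2 ((1:ℤ),(0:ℤ)) v = v.2 := by simp [det2]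
          have := snd_pos hv hv10
          omega
        have h2 : (S.cc y, (1:ℤ)) ∈ S.below y v := ⟨cc1_mem, hgt⟩
        have hne2 : (S.cc y, (1:ℤ)) ≠ ((1:ℤ),(0:ℤ)) := by simp [Prod.ext_iff]
        have hsub : {(S.cc y, (1:ℤ)), ((1:ℤ),(0:ℤ))} ⊆ S.below y v := by
          rw [Set.insert_subset_iff]
          exact ⟨h2, Set.singleton_subset_iff.2 h1⟩
        have : 2 ≤ S.B y v := by
          rw [← Set.ncard_pair hne2]
          exact Set.ncard_le_ncard hsub finBelow
        omega
    subst hveq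
    constructor
    · intro w hw hdet
      exact ray_cc1 hw hdet
    · intro w hw hdet _
      have hmem : w ∈ S.below y (S.cc y, 1) := ⟨hw, hdet⟩
      rw [below_cc1, Set.mem_singleton_iff] at hmem
      subst hmem
      simp [det2]
  · -- n = m + 2
    have hv10 : v ≠ (1, 0) := by
      rintro rfl; rw [B_one0] at hB; omega
    have hv2pos : 0 < v.2 := snd_pos hv hv10
    have hvcc : v ≠ (S.cc y, 1) := by
      rintro rfl; rw [B_cc1] at hB; omega
    have hs1ne : S.s1 y v ≠ (0, 1) := fun h => hvcc (s1_ne_zero1 h)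
    have hv1Qp : S.s1 y v ∈ S.Qp (S.r1 y) := s1_memQp hv hv2pos
    have hv1fst : 0 < (S.s1 y v).1 := fst_pos hv1Qp hs1ne
    have hv2Qp : S.s2 (S.r1 y) (S.s1 y v) ∈ S.Qp (S.r2 (S.r1 y)) := s2_memQp hv1Qp hv1fst
    have hBv2 : S.B (S.r2 (S.r1 y)) (S.s2 (S.r1 y) (S.s1 y v)) = m := by
      have := B_step hv hv2pos hs1ne; omega
    obtain ⟨IHsing, IHdet⟩ := IH m (by omega) _ _ hv2Qp hBv2
    -- membership transport for vectors not equal to (1,0) or (cc,1)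
    have transport : ∀ w, w ∈ S.Qp y → w ≠ (1,0) → w ≠ (S.cc y, 1) →
        S.s2 (S.r1 y) (S.s1 y w) ∈ S.Qp (S.r2 (S.r1 y)) := by
      intro w hw hw10 hwcc
      have hw2 : 0 < w.2 := snd_pos hw hw10
      have hwne : S.s1 y w ≠ (0,1) := fun h => hwcc (s1_ne_zero1 h)
      have hw1Qp : S.s1 y w ∈ S.Qp (S.r1 y) := s1_memQp hw hw2
      exact s2_memQp hw1Qp (fst_pos hw1Qp hwne)
    constructor
    · -- singleton clause
      intro w hw hdet
      have hw10 : w ≠ (1,0) := by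
        rintro rfl
        have h3 : det2 v ((1:ℤ),(0:ℤ)) = -v.2 := by simp [det2]
        omega
      have hwcc : w ≠ (S.cc y, 1) := by
        rintro rfl
        have h3 : det2 (S.cc y, 1) v = 0 := by
          have := det2_anti v (S.cc y, 1); omega
        exact hvcc (ray_cc1 hv h3)
      have hw2Qp := transport w hw hw10 hwcc
      have hdc : det2 (S.s2 (S.r1 y) (S.s1 y v)) (S.s2 (S.r1 y) (S.s1 y w)) = 0 := by
        rw [det2_comp]; exact hdet
      have heq := IHsing _ hw2Qp hdc
      exact s1_inj (s2_inj heq)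
    · -- consecutive determinant clause
      intro w hw hdet hH
      have hw10 : w ≠ (1,0) := by
        rintro rfl
        have h2 : 1 < S.B y v := by omega
        obtain ⟨a, b, ha, hb, hab⟩ := (Set.one_lt_ncard_iff finBelow).1 h2
        rcases eq_or_ne a ((1:ℤ),(0:ℤ)) with rfl | hane
        · refine hH b hb.1 ⟨?_, hb.2⟩
          have h3 : det2 ((1:ℤ),(0:ℤ)) b = b.2 := by simp [det2]
          have := snd_pos hb.1 hab.symm
          omega
        · refine hH a ha.1 ⟨?_, ha.2⟩
          have h3 : det2 ((1:ℤ),(0:ℤ)) a = a.2 := by simp [det2]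
          have := snd_pos ha.1 hane
          omega
      have hw2pos : 0 < w.2 := snd_pos hw hw10
      by_cases hwcc : w = (S.cc y, 1)
      · -- the "top" case
        subst hwcc
        have htop : S.above (S.r1 y) (S.s1 y v) = {((0:ℤ),(1:ℤ))} := by
          ext u'
          simp only [above, Set.mem_setOf_eq, Set.mem_singleton_iff]
          constructor
          · rintro ⟨hu', hdu⟩
            by_contra hne
            have hu10 : u' ≠ (1,0) := by
              rintro rfl
              have h3 : det2 (S.s1 y v) ((1:ℤ),(0:ℤ)) = -v.2 := by simp [det2, s1]
              omega
            have hu2 : 0 < u'.2 := snd_pos hu' hu10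
            have huQp : S.s1 (S.r1 y) u' ∈ S.Qp y := s1_memQp' hu' hu2
            have hdu2 : 0 < det2 (S.s1 (S.r1 y) u') v := by
              have h := det2_s1 (S := S) (y := y) (v := S.s1 (S.r1 y) u') (w := v)
              rw [s1_s1'] at h
              have ha := det2_anti (S.s1 y v) u'
              omega
            have hle : det2 (S.cc y, 1) (S.s1 (S.r1 y) u') ≤ 0 := by
              by_contra hpos
              exact hH _ huQp ⟨by omega, hdu2⟩
            rcases lt_or_eq_of_le hle with hlt | heq0
            · have hmem : S.s1 (S.r1 y) u' ∈ S.below y (S.cc y, 1) := by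
                refine ⟨huQp, ?_⟩
                have := det2_anti (S.cc y, 1) (S.s1 (S.r1 y) u')
                omega
              rw [below_cc1, Set.mem_singleton_iff] at hmem
              have hsnd : (S.s1 (S.r1 y) u').2 = u'.2 := rfl
              rw [hmem] at hsnd
              simp at hsnd
              omega
            · have hu := ray_cc1 huQp heq0
              apply hne
              have : u' = S.s1 y (S.s1 (S.r1 y) u') := s1_s1'.symm
              rw [this, hu]
              simp [s1]
          · rintro rfl
            refine ⟨zero1_mem, ?_⟩
            have h3 : det2 (S.s1 y v) ((0:ℤ),(1:ℤ)) = (S.s1 y v).1 := by simp [det2]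
            omega
        have hv1top := toplemma hv1Qp htop
        have h1 : det2 (S.s1 y (S.cc y, 1)) (S.s1 y v) = - det2 (S.cc y, 1) v := det2_s1
        have h2 : S.s1 y (S.cc y, 1) = ((0:ℤ),(1:ℤ)) := by simp [s1]
        rw [h2] at h1
        have h3 : det2 ((0:ℤ),(1:ℤ)) (S.s1 y v) = - (S.s1 y v).1 := by simp [det2]
        have h4 : (S.s1 y v).1 = 1 := by rw [hv1top]
        omega
      · -- generic transported case
        have hw2Qp := transport w hw hw10 hwcc
        have hdeq : det2 (S.s2 (S.r1 y) (S.s1 y w)) (S.s2 (S.r1 y) (S.s1 y v)) = det2 w v :=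
          det2_comp _ _ _ _
        have hH2 : ∀ u2 ∈ S.Qp (S.r2 (S.r1 y)),
            ¬(0 < det2 (S.s2 (S.r1 y) (S.s1 y w)) u2 ∧
              0 < det2 u2 (S.s2 (S.r1 y) (S.s1 y v))) := by
          rintro u2 hu2 ⟨hq1, hq2⟩
          have hu2ne : u2 ≠ (0,1) := by
            rintro rfl
            have h3 : det2 ((0:ℤ),(1:ℤ)) (S.s2 (S.r1 y) (S.s1 y v))
                = -(S.s1 y v).1 := by simp [det2, s2]
            omega
          have hu2fst : 0 < u2.1 := fst_pos hu2 hu2ne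
          have hu1Qp : S.s2 (S.r2 (S.r1 y)) u2 ∈ S.Qp (S.r1 y) := s2_memQp' hu2 hu2fst
          have hs2u1 : S.s2 (S.r1 y) (S.s2 (S.r2 (S.r1 y)) u2) = u2 := s2_s2'
          have hdu1v1 : det2 (S.s2 (S.r2 (S.r1 y)) u2) (S.s1 y v) < 0 := by
            have h := det2_s2 (S := S) (y := S.r1 y) (v := S.s2 (S.r2 (S.r1 y)) u2)
              (w := S.s1 y v)
            rw [hs2u1] at h
            omega
          have hu110 : S.s2 (S.r2 (S.r1 y)) u2 ≠ (1,0) := by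
            intro h
            rw [h] at hdu1v1
            have h3 : det2 ((1:ℤ),(0:ℤ)) (S.s1 y v) = (S.s1 y v).2 := by simp [det2]
            have hsnd : (S.s1 y v).2 = v.2 := rfl
            omega
          have hu12 : 0 < (S.s2 (S.r2 (S.r1 y)) u2).2 := snd_pos hu1Qp hu110
          have huQp : S.s1 (S.r1 y) (S.s2 (S.r2 (S.r1 y)) u2) ∈ S.Qp y :=
            s1_memQp' hu1Qp hu12
          have hΦu : S.s2 (S.r1 y) (S.s1 y (S.s1 (S.r1 y) (S.s2 (S.r2 (S.r1 y)) u2))) = u2 := by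
            rw [s1_s1', hs2u1]
          have hd1 : det2 w (S.s1 (S.r1 y) (S.s2 (S.r2 (S.r1 y)) u2))
              = det2 (S.s2 (S.r1 y) (S.s1 y w)) u2 := by
            have := det2_comp (S := S) y (S.r1 y) w (S.s1 (S.r1 y) (S.s2 (S.r2 (S.r1 y)) u2))
            rw [hΦu] at this
            omega
          have hd2 : det2 (S.s1 (S.r1 y) (S.s2 (S.r2 (S.r1 y)) u2)) v
              = det2 u2 (S.s2 (S.r1 y) (S.s1 y v)) := by
            have := det2_comp (S := S) y (S.r1 y) (S.s1 (S.r1 y) (S.s2 (S.r2 (S.r1 y)) u2)) v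
            rw [hΦu] at this
            omega
          exact hH _ huQp ⟨by omega, by omega⟩
        have hfin := IHdet _ hw2Qp (by omega) hH2
        omega


lemma sum_pos (hv : v ∈ S.Qp y) : 0 < v.1 + v.2 := by
  rcases eq_or_lt_of_le hv.2.2 with h2 | h2
  · have := eq_one0 hv h2.symm
    rw [this]; norm_num
  · have := hv.2.1; omega

lemma slope_lt {u w : ℤ × ℤ} (hu : u ∈ S.Qp y) (hw : w ∈ S.Qp y) (h : 0 < det2 u w) :
    (u.2 : ℚ) / (u.1 + u.2) < (w.2 : ℚ) / (w.1 + w.2) := by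
  have hu0 : (0:ℚ) < (u.1:ℚ) + u.2 := by exact_mod_cast sum_pos hu
  have hw0 : (0:ℚ) < (w.1:ℚ) + w.2 := by exact_mod_cast sum_pos hw
  rw [div_lt_div_iff₀ hu0 hw0]
  have h' : (0:ℤ) < u.1 * w.2 - u.2 * w.1 := h
  have hc : (0:ℚ) < (u.1:ℚ) * w.2 - (u.2:ℚ) * w.1 := by exact_mod_cast h'
  nlinarith

lemma exists_slope_max (T : Set (ℤ × ℤ)) (hsub : T ⊆ S.Qp y) (hfinT : T.Finite)
    (hne : T.Nonempty) : ∃ a ∈ T, ∀ b ∈ T, ¬ 0 < det2 a b := by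
  obtain ⟨a, haT, hmax⟩ :=
    Set.Finite.exists_maximalFor (fun u : ℤ × ℤ => (u.2 : ℚ) / (u.1 + u.2)) T hfinT hne
  refine ⟨a, haT, fun b hbT hdet => ?_⟩
  have hlt := slope_lt (hsub haT) (hsub hbT) hdet
  exact absurd (hmax (j := b) hbT hlt.le) (not_le.mpr hlt)

lemma exists_slope_min (T : Set (ℤ × ℤ)) (hsub : T ⊆ S.Qp y) (hfinT : T.Finite)
    (hne : T.Nonempty) : ∃ a ∈ T, ∀ b ∈ T, ¬ 0 < det2 b a := by
  obtain ⟨a, haT, hmin⟩ :=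
    Set.Finite.exists_minimalFor (fun u : ℤ × ℤ => (u.2 : ℚ) / (u.1 + u.2)) T hfinT hne
  refine ⟨a, haT, fun b hbT hdet => ?_⟩
  have hlt := slope_lt (hsub hbT) (hsub haT) hdet
  exact absurd (hmin (j := b) hbT hlt.le) (not_le.mpr hlt)

variable {k : ℤ}

lemma mem_imp_nonneg (h : (k, (1:ℤ)) ∈ S.Q y) : 0 ≤ k := by
  rcases S.posneg y (k, 1) h with hp | hn
  · exact hp.1
  · have h2 : (1:ℤ) ≤ 0 := hn.2
    omega

lemma mem_imp_le (h : (k, (1:ℤ)) ∈ S.Q y) : k ≤ S.cc y := by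
  have h1 := S.mem1 y (k, 1) h
  rcases S.posneg _ _ h1 with hp | hn
  · have h2 : (0:ℤ) ≤ S.cc y * 1 - k := hp.1
    have h3 : S.cc y * (1:ℤ) = S.cc y := mul_one _
    omega
  · have h2 : (1:ℤ) ≤ 0 := hn.2
    omega

lemma le_imp_mem (hk0 : 0 ≤ k) (hk : k ≤ S.cc y) : (k, (1:ℤ)) ∈ S.Q y := by
  rcases eq_or_lt_of_le hk with heq | hlt
  · subst heq; exact cc1_mem.1
  rcases eq_or_lt_of_le hk0 with heq0 | hpos
  · rw [← heq0]; exact S.zero1 y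
  by_contra hmem
  have hKSsub : {u | u ∈ S.Qp y ∧ 0 < det2 u (k, 1)} ⊆ S.Qp y := fun u hu => hu.1
  have hKSfin : {u | u ∈ S.Qp y ∧ 0 < det2 u (k, 1)}.Finite := finQp.subset hKSsub
  have hccKS : (S.cc y, (1:ℤ)) ∈ {u | u ∈ S.Qp y ∧ 0 < det2 u (k, 1)} := by
    refine ⟨cc1_mem, ?_⟩
    have h3 : det2 (S.cc y, (1:ℤ)) (k, (1:ℤ)) = S.cc y - k := by simp [det2]
    omega
  obtain ⟨u0, hu0KS, hu0max⟩ := exists_slope_max _ hKSsub hKSfin ⟨_, hccKS⟩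
  have hTSsub : {u | u ∈ S.Qp y ∧ 0 < det2 (k, 1) u} ⊆ S.Qp y := fun u hu => hu.1
  have hTSfin : {u | u ∈ S.Qp y ∧ 0 < det2 (k, 1) u}.Finite := finQp.subset hTSsub
  have h01TS : ((0:ℤ),(1:ℤ)) ∈ {u | u ∈ S.Qp y ∧ 0 < det2 (k, 1) u} := by
    refine ⟨zero1_mem, ?_⟩
    have h3 : det2 (k, (1:ℤ)) ((0:ℤ),(1:ℤ)) = k := by simp [det2]
    omega
  obtain ⟨w0, hw0TS, hw0min⟩ := exists_slope_min _ hTSsub hTSfin ⟨_, h01TS⟩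
  -- nothing lies strictly between u0 and w0
  have hbetween : ∀ z ∈ S.Qp y, ¬(0 < det2 u0 z ∧ 0 < det2 z w0) := by
    rintro z hz ⟨hz1, hz2⟩
    rcases lt_trichotomy (det2 z (k, 1)) 0 with hlt' | heq' | hgt'
    · have hzTS : z ∈ {u | u ∈ S.Qp y ∧ 0 < det2 (k, 1) u} := by
        refine ⟨hz, ?_⟩
        have := det2_anti (k, (1:ℤ)) z
        omega
      exact hw0min z hzTS hz2
    · -- z is parallel to (k,1)
      have hz10 : z ≠ (1, 0) := by
        rintro rfl
        have h3 : det2 ((1:ℤ),(0:ℤ)) (k, (1:ℤ)) = 1 := by simp [det2]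
        omega
      have hz2pos : 0 < z.2 := snd_pos hz hz10
      have hdz : det2 z (k, (1:ℤ)) = z.1 - z.2 * k := by simp [det2]
      have hz1eq : z.1 = z.2 * k := by omega
      rcases (by omega : z.2 = 1 ∨ 2 ≤ z.2) with h1 | h2
      · apply hmem
        have hzk : z.2 * k = k := by rw [h1, one_mul]
        have hzeq : z = (k, (1:ℤ)) := by
          ext
          · show z.1 = k; omega
          · exact h1
        rw [← hzeq]; exact hz.1
      · -- z.2 ≥ 2 : contradiction with the consecutive determinant being 1
        obtain ⟨_, hdetclause⟩ := main (S.B y z) y z hz rfl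
        have hexp : ∀ q : ℤ × ℤ, det2 q z = z.2 * det2 q (k, (1:ℤ)) := by
          intro q
          simp only [det2]
          rw [hz1eq]; ring
        have hu0z : 0 < det2 u0 z := by
          rw [hexp u0]
          exact mul_pos (by omega) hu0KS.2
        have hnb : ∀ q ∈ S.Qp y, ¬(0 < det2 u0 q ∧ 0 < det2 q z) := by
          rintro q hq ⟨hq1, hq2⟩
          rw [hexp q] at hq2
          have hq2' : 0 < det2 q (k, (1:ℤ)) := by
            by_contra hq3
            push_neg at hq3
            nlinarith
          exact hu0max q ⟨hq, hq2'⟩ hq1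
        have hone := hdetclause u0 hu0KS.1 hu0z hnb
        rw [hexp u0] at hone
        nlinarith [hu0KS.2]
    · exact hu0max z ⟨hz, hgt'⟩ hz1
  -- u0 is strictly below w0
  have hw0ne : w0 ≠ (1, 0) := by
    rintro rfl
    have h3 : det2 (k, (1:ℤ)) ((1:ℤ),(0:ℤ)) = -1 := by simp [det2]
    have := hw0TS.2
    omega
  have hw02 : 0 < w0.2 := snd_pos hw0TS.1 hw0ne
  have hu0w0 : 0 < det2 u0 w0 := by
    have hid : det2 u0 w0 = det2 u0 (k, (1:ℤ)) * w0.2 + u0.2 * det2 (k, (1:ℤ)) w0 := by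
      simp [det2]; ring
    nlinarith [hu0KS.2, hw0TS.2, hu0KS.1.2.2]
  obtain ⟨_, hdc⟩ := main (S.B y w0) y w0 hw0TS.1 rfl
  have hone := hdc u0 hu0KS.1 hu0w0 hbetween
  have hu0ne : u0 ≠ (1, 0) := by
    rintro rfl
    refine hu0max (S.cc y, 1) hccKS ?_
    show (0:ℤ) < det2 (1, 0) (S.cc y, 1)
    simp [det2]
  have hu02 : 0 < u0.2 := snd_pos hu0KS.1 hu0ne
  have hkey : det2 (k, (1:ℤ)) w0 * u0.2 + det2 u0 (k, (1:ℤ)) * w0.2 = det2 u0 w0 := by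
    simp [det2]; ring
  nlinarith [hu0KS.2, hw0TS.2]

end R2Sys




section Bridge

variable {I X : Type*} [Fintype I] [DecidableEq I]

theorem final_theorem [Nonempty I] [Nonempty X]
    (r : I → X → X) (A : X → I → I → ℤ)
    (hr : ∀ i x, r i (r i x) = x)
    (hAdiag : ∀ x i, A x i i = 2)
    (hAoff : ∀ x i j, i ≠ j → A x i j ≤ 0)
    (hAzero : ∀ x i j, A x i j = 0 ↔ A x j i = 0)
    (hAr : ∀ x i j, A x i j = A (r i x) i j)
    (Δ : X → Set (I → ℤ))
    (hfin : ∀ x, (Δ x).Finite)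
    (hposneg : ∀ x, Δ x = (Δ x ∩ {v | ∀ i, 0 ≤ v i}) ∪ (-(Δ x ∩ {v | ∀ i, 0 ≤ v i})))
    (hsimple : ∀ x i, Δ x ∩ {v | ∃ z : ℤ, v = z • Pi.single i 1} =
        {Pi.single i 1, -Pi.single i 1})
    (hrefl : ∀ x i, cartanRefl A i x '' Δ x = Δ (r i x)) :
    ∀ (x : X) (i j : I), i ≠ j →
      (∀ n : ℕ, (n : ℤ) • Pi.single i 1 + Pi.single j 1 ∈ Δ x ↔ (n : ℤ) ≤ -A x i j) ∧
      IsGreatest {n : ℤ | 0 ≤ n ∧ n • Pi.single i 1 + Pi.single j 1 ∈ Δ x} (-A x i j) := by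
  intro x i j hij
  classical
  set φ : ℤ × ℤ → (I → ℤ) := fun v => v.1 • Pi.single i 1 + v.2 • Pi.single j 1 with hφ
  have hφi : ∀ v, φ v i = v.1 := by
    intro v
    simp [hφ, Pi.single_eq_same, Pi.single_eq_of_ne hij]
  have hφj : ∀ v, φ v j = v.2 := by
    intro v
    simp [hφ, Pi.single_eq_same, Pi.single_eq_of_ne hij.symm]
  have hφinj : Function.Injective φ := by
    intro a b h
    ext
    · have := congrFun h i
      rwa [hφi, hφi] at this
    · have := congrFun h j
      rwa [hφj, hφj] at this
  have hone : ∀ (f : I → ℤ) (i₀ : I), ∑ m, f m * (Pi.single i₀ (1:ℤ) : I → ℤ) m = f i₀ := by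
    intro f i₀
    rw [Finset.sum_eq_single i₀]
    · simp
    · intro b _ hb
      rw [Pi.single_eq_of_ne hb]
      ring
    · intro h
      exact absurd (Finset.mem_univ i₀) h
  have hsum : ∀ (y : X) (l : I) (v : ℤ × ℤ),
      ∑ m, A y l m * φ v m = A y l i * v.1 + A y l j * v.2 := by
    intro y l v
    have hterm : ∀ m, A y l m * φ v m
        = v.1 * (A y l m * (Pi.single i (1:ℤ) : I → ℤ) m)
          + v.2 * (A y l m * (Pi.single j (1:ℤ) : I → ℤ) m) := by
      intro m
      simp [hφ]
      ring
    rw [Finset.sum_congr rfl (fun m _ => hterm m), Finset.sum_add_distrib,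
      ← Finset.mul_sum, ← Finset.mul_sum, hone, hone]
    ring
  have hrefli : ∀ (y : X) (v : ℤ × ℤ),
      cartanRefl A i y (φ v) = φ (-A y i j * v.2 - v.1, v.2) := by
    intro y v
    have hco : cartanRefl A i y (φ v)
        = φ v - (A y i i * v.1 + A y i j * v.2) • Pi.single i 1 := by
      rw [cartanRefl, hsum y i v]
    rw [hco, hAdiag y i]
    funext m
    simp [hφ, sub_eq_iff_eq_add]
    ring
  have hreflj : ∀ (y : X) (v : ℤ × ℤ),
      cartanRefl A j y (φ v) = φ (v.1, -A y j i * v.1 - v.2) := by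
    intro y v
    have hco : cartanRefl A j y (φ v)
        = φ v - (A y j i * v.1 + A y j j * v.2) • Pi.single j 1 := by
      rw [cartanRefl, hsum y j v]
    rw [hco, hAdiag y j]
    funext m
    simp [hφ, sub_eq_iff_eq_add]
    ring
  have hsingleQ : ∀ (y : X) (l : I), Pi.single l (1:ℤ) ∈ Δ y := by
    intro y l
    have h1 : Pi.single l (1:ℤ) ∈ ({Pi.single l 1, -Pi.single l 1} : Set (I → ℤ)) := by
      left; rfl
    rw [← hsimple y l] at h1
    exact h1.1
  let S : CartanAux.R2Sys X :=
  { r1 := r i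
    r2 := r j
    cc := fun y => -A y i j
    dd := fun y => -A y j i
    Q := fun y => {v | φ v ∈ Δ y}
    fin := fun y => Set.Finite.preimage (Function.Injective.injOn hφinj) (hfin y)
    hc := fun y => by show (0:ℤ) ≤ -A y i j; have := hAoff y i j hij; omega
    hd := fun y => by show (0:ℤ) ≤ -A y j i; have := hAoff y j i hij.symm; omega
    hcr := fun y => by simp only [neg_inj]; exact (hAr y i j).symm
    hdr := fun y => by simp only [neg_inj]; exact (hAr y j i).symm
    hr1 := hr i
    hr2 := hr j
    mem1 := by
      intro y v hv
      have himg : cartanRefl A i y (φ v) ∈ Δ (r i y) := by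
        rw [← hrefl y i]
        exact ⟨φ v, hv, rfl⟩
      rw [hrefli y v] at himg
      exact himg
    mem2 := by
      intro y v hv
      have himg : cartanRefl A j y (φ v) ∈ Δ (r j y) := by
        rw [← hrefl y j]
        exact ⟨φ v, hv, rfl⟩
      rw [hreflj y v] at himg
      exact himg
    posneg := by
      intro y v hv0
      have hv : φ v ∈ Δ y := hv0
      rw [hposneg y] at hv
      rcases hv with hv | hv
      · left
        constructor
        · have := hv.2 i; rwa [hφi] at this
        · have := hv.2 j; rwa [hφj] at this
      · right
        rw [Set.mem_neg] at hv
        have h1 := hv.2 i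
        have h2 := hv.2 j
        rw [Pi.neg_apply, hφi] at h1
        rw [Pi.neg_apply, hφj] at h2
        exact ⟨by omega, by omega⟩
    axis1 := by
      intro y a hQ
      have hmem : φ (a, 0) ∈ Δ y ∩ {v | ∃ z : ℤ, v = z • Pi.single i 1} := by
        refine ⟨hQ, ⟨a, ?_⟩⟩
        show (a:ℤ) • (Pi.single i 1 : I → ℤ) + (0:ℤ) • (Pi.single j 1 : I → ℤ)
          = a • (Pi.single i 1 : I → ℤ)
        rw [zero_smul, add_zero]
      rw [hsimple y i] at hmem
      rcases hmem with h | h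
      · left
        have := congrFun h i
        rw [hφi] at this
        simpa using this
      · right
        have := congrFun h i
        rw [hφi] at this
        simpa using this
    axis2 := by
      intro y b hQ
      have hmem : φ (0, b) ∈ Δ y ∩ {v | ∃ z : ℤ, v = z • Pi.single j 1} := by
        refine ⟨hQ, ⟨b, ?_⟩⟩
        show (0:ℤ) • (Pi.single i 1 : I → ℤ) + (b:ℤ) • (Pi.single j 1 : I → ℤ)
          = b • (Pi.single j 1 : I → ℤ)
        rw [zero_smul, zero_add]
      rw [hsimple y j] at hmem
      rcases hmem with h | h
      · left
        have := congrFun h j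
        rw [hφj] at this
        simpa using this
      · right
        have := congrFun h j
        rw [hφj] at this
        simpa using this
    one0 := by
      intro y
      show φ (1, 0) ∈ Δ y
      have heq : φ ((1:ℤ),(0:ℤ)) = Pi.single i 1 := by
        show (1:ℤ) • (Pi.single i 1 : I → ℤ) + (0:ℤ) • (Pi.single j 1 : I → ℤ) = _
        rw [zero_smul, add_zero, one_smul]
      rw [heq]
      exact hsingleQ y i
    zero1 := by
      intro y
      show φ (0, 1) ∈ Δ y
      have heq : φ ((0:ℤ),(1:ℤ)) = Pi.single j 1 := by
        show (0:ℤ) • (Pi.single i 1 : I → ℤ) + (1:ℤ) • (Pi.single j 1 : I → ℤ) = _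
        rw [zero_smul, zero_add, one_smul]
      rw [heq]
      exact hsingleQ y j }
  have hQiff : ∀ (a : ℤ), ((a, (1:ℤ)) ∈ S.Q x ↔ a • Pi.single i 1 + Pi.single j 1 ∈ Δ x) := by
    intro a
    have heq : φ (a, (1:ℤ)) = a • Pi.single i 1 + Pi.single j 1 := by
      show a • (Pi.single i 1 : I → ℤ) + (1:ℤ) • (Pi.single j 1 : I → ℤ) = _
      rw [one_smul]
    show φ (a, 1) ∈ Δ x ↔ _
    rw [heq]
  refine ⟨?_, ⟨?_, ?_⟩, ?_⟩
  · intro n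
    constructor
    · intro hmem
      exact CartanAux.R2Sys.mem_imp_le ((hQiff (n:ℤ)).2 hmem)
    · intro hle
      exact (hQiff (n:ℤ)).1
        (CartanAux.R2Sys.le_imp_mem (S := S) (y := x) (Int.natCast_nonneg n) hle)
  · have := hAoff x i j hij; omega
  · exact (hQiff (-A x i j)).1
      (CartanAux.R2Sys.le_imp_mem (S := S) (y := x)
        (by have := hAoff x i j hij; omega) (le_refl _))
  · rintro n ⟨hn0, hnmem⟩
    exact CartanAux.R2Sys.mem_imp_le ((hQiff n).2 hnmem)

end Bridge
end CartanAux

/-- In a Cartan scheme with a finite root system: for `i ≠ j` and `k ∈ ℕ`,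
`k·α_i + α_j ∈ Δ^X` iff `k ≤ −a^X_{ij}`; consequently
`−a^X_{ij}` is the greatest `k ∈ ℕ₀` with `k·α_i + α_j ∈ Δ^X`. -/
theorem root_string_iff_cartan_entry {I X : Type*} [Fintype I] [DecidableEq I]
    [Nonempty I] [Nonempty X]
    -- Cartan scheme data
    (r : I → X → X) (A : X → I → I → ℤ)
    (hr : ∀ i x, r i (r i x) = x)
    (hAdiag : ∀ x i, A x i i = 2)
    (hAoff : ∀ x i j, i ≠ j → A x i j ≤ 0)
    (hAzero : ∀ x i j, A x i j = 0 ↔ A x j i = 0)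
    (hAr : ∀ x i j, A x i j = A (r i x) i j)
    -- root system data
    (Δ : X → Set (I → ℤ))
    (hfin : ∀ x, (Δ x).Finite)
    (hposneg : ∀ x, Δ x = (Δ x ∩ {v | ∀ i, 0 ≤ v i}) ∪ (-(Δ x ∩ {v | ∀ i, 0 ≤ v i})))
    (hsimple : ∀ x i, Δ x ∩ {v | ∃ z : ℤ, v = z • Pi.single i 1} =
        {Pi.single i 1, -Pi.single i 1})
    (hrefl : ∀ x i, cartanRefl A i x '' Δ x = Δ (r i x))
    (hcard : ∀ x i j, i ≠ j →
        (r i ∘ r j)^[(Δ x ∩ {v | ∃ a b : ℕ,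
          v = (a : ℤ) • Pi.single i 1 + (b : ℤ) • Pi.single j 1}).ncard] x = x) :
    -- conclusion
    ∀ (x : X) (i j : I), i ≠ j →
      (∀ n : ℕ, (n : ℤ) • Pi.single i 1 + Pi.single j 1 ∈ Δ x ↔ (n : ℤ) ≤ -A x i j) ∧
      IsGreatest {n : ℤ | 0 ≤ n ∧ n • Pi.single i 1 + Pi.single j 1 ∈ Δ x} (-A x i j) :=
  CartanAux.final_theorem r A hr hAdiag hAoff hAzero hAr Δ hfin hposneg hsimple hrefl
end
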